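/- arXiv:2410.20618 — 4 statements merged into one kernel-verified Lean document; each statement's English description precedes it below -/
import Mathlib

section
/- There exists an absolute constant c > 0 such that for every finite set A ⊆ ℝ with |A| ≥ 2 and every K ≥ 1 with |A + A| ≤ K|A|, one has |A² + A²| ≥ c · |A|² / (K^{12} log |A|), where A² = {a² : a ∈ A}. -/
open Finset Pointwise

namespace SolAux

noncomputable section

def spair (X : Finset ℝ) (l : ℝ) : Finset (ℝ × ℝ) :=
  (X ×ˢ X).filter fun p => p.2 = l * p.1 ∧ p.1 ≠ 0

def sfun (X : Finset ℝ) (l : ℝ) : ℕ := (spair X l).card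

def quadNZ (X Y : Finset ℝ) : Finset ((ℝ × ℝ) × (ℝ × ℝ)) :=
  ((X ×ˢ Y) ×ˢ (X ×ˢ Y)).filter fun q => q.1.1 * q.1.2 = q.2.1 * q.2.2 ∧ q.1.1 * q.1.2 ≠ 0

lemma mem_spair {X : Finset ℝ} {l : ℝ} {p : ℝ × ℝ} :
    p ∈ spair X l ↔ (p.1 ∈ X ∧ p.2 ∈ X) ∧ p.2 = l * p.1 ∧ p.1 ≠ 0 := by
  simp [spair, mem_filter, mem_product]

lemma sfun_le (X : Finset ℝ) (l : ℝ) : sfun X l ≤ X.card := by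
  apply Finset.card_le_card_of_injOn (fun p => p.1)
  · intro p hp; exact (mem_spair.1 hp).1.1
  · intro p hp q hq h
    rw [Finset.mem_coe, mem_spair] at hp hq
    have h1 : p.1 = q.1 := h
    have : p.2 = q.2 := by rw [hp.2.1, hq.2.1, h1]
    exact Prod.ext h1 this

lemma one_le_sfun (X : Finset ℝ) (l : ℝ) (hl : l ∈ (X.erase 0) / (X.erase 0)) :
    1 ≤ sfun X l := by
  rw [Finset.mem_div] at hl
  obtain ⟨a, ha, b, hb, rfl⟩ := hl
  rw [Finset.mem_erase] at ha hb
  have : (b, a) ∈ spair X (a / b) := by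
    rw [mem_spair]
    exact ⟨⟨hb.2, ha.2⟩, (div_mul_cancel₀ a hb.1).symm, hb.1⟩
  exact Finset.card_pos.2 ⟨_, this⟩

lemma sfun_eq_zero (X : Finset ℝ) (l : ℝ) (hl : l ≠ 0)
    (h : l ∉ (X.erase 0) / (X.erase 0)) : sfun X l = 0 := by
  rw [sfun, Finset.card_eq_zero]
  by_contra hne
  obtain ⟨p, hp⟩ := Finset.nonempty_iff_ne_empty.2 hne
  rw [mem_spair] at hp
  apply h
  rw [Finset.mem_div]
  have hp2 : p.2 ≠ 0 := by rw [hp.2.1]; exact mul_ne_zero hl hp.2.2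
  refine ⟨p.2, Finset.mem_erase.2 ⟨hp2, hp.1.2⟩, p.1, Finset.mem_erase.2 ⟨hp.2.2, hp.1.1⟩, ?_⟩
  rw [hp.2.1]; exact mul_div_cancel_right₀ l hp.2.2

lemma fiber_card (X Y : Finset ℝ) (l : ℝ) (hl : l ≠ 0) :
    ((quadNZ X Y).filter fun q => q.1.1 / q.2.1 = l).card = sfun X l * sfun Y l := by
  rw [sfun, sfun, ← Finset.card_product]
  apply Finset.card_nbij' (fun q => ((q.2.1, q.1.1), (q.1.2, q.2.2)))
    (fun p => ((p.1.2, p.2.1), (p.1.1, p.2.2)))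
  · intro q hq
    simp only [Finset.mem_coe, quadNZ, mem_filter, mem_product] at hq
    obtain ⟨⟨⟨⟨hx, hy⟩, hx', hy'⟩, heq, hnz⟩, hdiv⟩ := hq
    have hx'0 : q.2.1 ≠ 0 := by
      intro h0; apply hnz; rw [heq, h0, zero_mul]
    have hxl : q.1.1 = l * q.2.1 := by
      exact (div_eq_iff hx'0).1 hdiv
    have hy0 : q.1.2 ≠ 0 := fun h0 => hnz (by rw [h0, mul_zero])
    have hyl : q.2.2 = l * q.1.2 := by
      apply mul_left_cancel₀ hx'0
      rw [← heq, hxl]; ring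
    simp only [Finset.mem_coe, mem_product, mem_spair]
    exact ⟨⟨⟨hx', hx⟩, hxl, hx'0⟩, ⟨hy, hy'⟩, hyl, hy0⟩
  · intro p hp
    simp only [Finset.mem_coe, mem_product, mem_spair] at hp
    obtain ⟨⟨⟨hx', hx⟩, hxl, hx'0⟩, ⟨hy, hy'⟩, hyl, hy0⟩ := hp
    simp only [Finset.mem_coe, quadNZ, mem_filter, mem_product]
    have hx0 : p.1.2 ≠ 0 := by rw [hxl]; exact mul_ne_zero hl hx'0
    refine ⟨⟨⟨⟨hx, hy⟩, hx', hy'⟩, ?_, mul_ne_zero hx0 hy0⟩, ?_⟩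
    · rw [hxl, hyl]; ring
    · rw [hxl]; field_simp
  · intro q _; rfl
  · intro p _; rfl

lemma quadNZ_card (X Y : Finset ℝ) :
    (quadNZ X Y).card = ∑ l ∈ (X.erase 0) / (X.erase 0), sfun X l * sfun Y l := by
  rw [Finset.card_eq_sum_card_fiberwise (f := fun q => q.1.1 / q.2.1)
    (t := (X.erase 0) / (X.erase 0))]
  · apply Finset.sum_congr rfl
    intro l hl
    have hl0 : l ≠ 0 := by
      rw [Finset.mem_div] at hl
      obtain ⟨a, ha, b, hb, rfl⟩ := hl
      rw [Finset.mem_erase] at ha hb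
      exact div_ne_zero ha.1 hb.1
    exact fiber_card X Y l hl0
  · intro q hq
    simp only [Finset.mem_coe, quadNZ, mem_filter, mem_product] at hq
    obtain ⟨⟨⟨hx, _⟩, hx', _⟩, heq, hnz⟩ := hq
    have hx0 : q.1.1 ≠ 0 := fun h0 => hnz (by rw [h0, zero_mul])
    have hx'0 : q.2.1 ≠ 0 := by
      intro h0; apply hnz; rw [heq, h0, zero_mul]
    exact Finset.div_mem_div (Finset.mem_erase.2 ⟨hx0, hx⟩) (Finset.mem_erase.2 ⟨hx'0, hx'⟩)





lemma lam_pos (P : Finset ℝ) (hP : ∀ x ∈ P, 0 < x) (l : ℝ) (hs : 1 ≤ sfun P l) : 0 < l := by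
  obtain ⟨p, hp⟩ := Finset.card_pos.1 hs
  rw [mem_spair] at hp
  have h1 : 0 < p.1 := hP _ hp.1.1
  have h2 : 0 < p.2 := hP _ hp.1.2
  nlinarith [hp.2.1]

/-- Solymosi's key geometric claim. -/
lemma key (P : Finset ℝ) (hP : ∀ x ∈ P, 0 < x) (M : Finset ℝ) (D : ℕ) (hD : 1 ≤ D)
    (hs : ∀ l ∈ M, D ≤ sfun P l) :
    M.card * D ^ 2 ≤ 2 * (P + P).card ^ 2 := by
  rcases Finset.eq_empty_or_nonempty M with rfl | hMne
  · simp
  -- P is nonempty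
  obtain ⟨l₀, hl₀⟩ := hMne
  have hPne : P.Nonempty := by
    have h1 : 1 ≤ sfun P l₀ := le_trans hD (hs _ hl₀)
    obtain ⟨p, hp⟩ := Finset.card_pos.1 h1
    exact ⟨p.1, (mem_spair.1 hp).1.1⟩
  have hPle : P.card ≤ (P + P).card := Finset.card_le_card_add_right hPne
  set m := M.card with hm
  set L := M.sort (· ≤ ·) with hL
  have hlen : L.length = m := Finset.length_sort _
  have hsorted : L.Pairwise (· < ·) := (Finset.sortedLT_sort M).pairwise
  set lam : ℕ → ℝ := fun i => L.getD i 0 with hlam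
  have hmem : ∀ i, i < m → lam i ∈ M := by
    intro i hi
    have hi' : i < L.length := by rw [hlen]; exact hi
    rw [hlam]
    simp only [List.getD_eq_getElem _ _ hi']
    exact (Finset.mem_sort _).1 (List.getElem_mem _)
  have hlt : ∀ i j, i < j → j < m → lam i < lam j := by
    intro i j hij hj
    have hj' : j < L.length := by rw [hlen]; exact hj
    have hi' : i < L.length := lt_trans (by exact_mod_cast hij) hj'
    simp only [hlam, List.getD_eq_getElem _ _ hi', List.getD_eq_getElem _ _ hj']
    exact hsorted.rel_get_of_lt (a := ⟨i, hi'⟩) (b := ⟨j, hj'⟩) hij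
  -- case m = 1
  rcases le_or_gt m 1 with hm1 | hm2
  · have hm1' : m = 1 := le_antisymm hm1 (Finset.card_pos.2 ⟨l₀, hl₀⟩)
    have hpos : 0 < m := Finset.card_pos.2 ⟨l₀, hl₀⟩
    rw [hm1', one_mul]
    have h1 : D ≤ P.card := le_trans (hs _ hl₀) (sfun_le _ _)
    calc D ^ 2 ≤ (P + P).card ^ 2 := Nat.pow_le_pow_left (le_trans h1 hPle) 2
    _ ≤ 2 * (P + P).card ^ 2 := Nat.le_mul_of_pos_left _ (by norm_num)
  -- main case: m ≥ 2
  set T : ℕ → Finset (ℝ × ℝ) :=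
    fun i => ((spair P (lam i)) ×ˢ (spair P (lam (i + 1)))).image (fun pq => pq.1 + pq.2) with hT
  have hslope : ∀ i, i + 1 < m → ∀ t ∈ T i,
      (t ∈ (P + P) ×ˢ (P + P)) ∧ 0 < t.1 ∧ lam i * t.1 < t.2 ∧ t.2 < lam (i + 1) * t.1 := by
    intro i hi t ht
    simp only [hT, Finset.mem_image, Finset.mem_product] at ht
    obtain ⟨pq, hpq, rfl⟩ := ht
    obtain ⟨hp, hq⟩ := hpq
    rw [mem_spair] at hp hq
    have ha : 0 < pq.1.1 := hP _ hp.1.1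
    have hb : 0 < pq.2.1 := hP _ hq.1.1
    have hlm : lam i < lam (i + 1) := hlt i (i + 1) (by omega) hi
    have hlpos : 0 < lam i := by
      refine lam_pos P hP _ (le_trans hD (hs _ (hmem i (by omega))))
    simp only [Prod.fst_add, Prod.snd_add]
    constructor
    · rw [Finset.mem_product]
      simp only [Prod.fst_add, Prod.snd_add]
      exact ⟨Finset.add_mem_add hp.1.1 hq.1.1, Finset.add_mem_add hp.1.2 hq.1.2⟩
    refine ⟨by positivity, ?_, ?_⟩
    · rw [hp.2.1, hq.2.1]
      have : lam i * (pq.1.1 + pq.2.1) = lam i * pq.1.1 + lam i * pq.2.1 := by ring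
      rw [this]
      have : lam i * pq.2.1 < lam (i+1) * pq.2.1 := by nlinarith
      simpa using this
    · rw [hp.2.1, hq.2.1]
      have : lam (i+1) * (pq.1.1 + pq.2.1) = lam (i+1) * pq.1.1 + lam (i+1) * pq.2.1 := by ring
      rw [this]
      have : lam i * pq.1.1 < lam (i+1) * pq.1.1 := by nlinarith
      simpa using this
  have hcard : ∀ i, i + 1 < m → D ^ 2 ≤ (T i).card := by
    intro i hi
    have hlm : lam i < lam (i + 1) := hlt i (i + 1) (by omega) hi
    have hinj : Set.InjOn (fun pq : (ℝ × ℝ) × (ℝ × ℝ) => pq.1 + pq.2)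
        (((spair P (lam i)) ×ˢ (spair P (lam (i + 1))) : Finset ((ℝ × ℝ) × (ℝ × ℝ))) : Set ((ℝ × ℝ) × (ℝ × ℝ))) := by
      intro x hx y hy hxy
      rw [Finset.mem_coe, Finset.mem_product] at hx hy
      obtain ⟨hx1, hx2⟩ := hx
      obtain ⟨hy1, hy2⟩ := hy
      rw [mem_spair] at hx1 hx2 hy1 hy2
      have e1 : x.1.1 + x.2.1 = y.1.1 + y.2.1 := congrArg Prod.fst hxy
      have e2 : x.1.2 + x.2.2 = y.1.2 + y.2.2 := congrArg Prod.snd hxy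
      rw [hx1.2.1, hx2.2.1, hy1.2.1, hy2.2.1] at e2
      have h3 : (lam (i + 1) - lam i) * (x.2.1 - y.2.1) = 0 := by
        linear_combination e2 - lam i * e1
      have hq1 : x.2.1 = y.2.1 := by
        rcases mul_eq_zero.1 h3 with h | h
        · exfalso; linarith
        · linarith
      have hp1 : x.1.1 = y.1.1 := by linarith [e1]
      have hx' : x.1 = y.1 := Prod.ext hp1 (by rw [hx1.2.1, hy1.2.1, hp1])
      have hy' : x.2 = y.2 := Prod.ext hq1 (by rw [hx2.2.1, hy2.2.1, hq1])
      exact Prod.ext hx' hy'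
    rw [hT]
    simp only
    rw [Finset.card_image_of_injOn hinj, Finset.card_product]
    have h1 : D ≤ sfun P (lam i) := hs _ (hmem i (by omega))
    have h2 : D ≤ sfun P (lam (i + 1)) := hs _ (hmem (i + 1) hi)
    calc D ^ 2 = D * D := sq D
    _ ≤ sfun P (lam i) * sfun P (lam (i + 1)) := Nat.mul_le_mul h1 h2
  have hdisj : ∀ i ∈ Finset.range (m - 1), ∀ j ∈ Finset.range (m - 1), i ≠ j →
      Disjoint (T i) (T j) := by
    have hkey : ∀ i j, i < j → j < m - 1 → Disjoint (T i) (T j) := by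
      intro i j hij hj
      rw [Finset.disjoint_left]
      intro t hti htj
      have h1 := hslope i (by omega) t hti
      have h2 := hslope j (by omega) t htj
      have hij1 : lam (i + 1) ≤ lam j := by
        rcases eq_or_lt_of_le (by omega : i + 1 ≤ j) with h | h
        · rw [h]
        · exact le_of_lt (hlt _ _ h (by omega))
      have c1 : t.2 < lam (i + 1) * t.1 := h1.2.2.2
      have c2 : lam j * t.1 < t.2 := h2.2.2.1
      have ht1 : 0 < t.1 := h1.2.1
      nlinarith
    intro i hi j hj hij
    rw [Finset.mem_range] at hi hj
    rcases lt_or_gt_of_ne hij with h | h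
    · exact hkey i j h hj
    · exact (hkey j i h hi).symm
  have hsum : (m - 1) * D ^ 2 ≤ (P + P).card ^ 2 := by
    have h1 : ∑ i ∈ Finset.range (m - 1), D ^ 2 ≤ ∑ i ∈ Finset.range (m - 1), (T i).card := by
      apply Finset.sum_le_sum
      intro i hi
      rw [Finset.mem_range] at hi
      exact hcard i (by omega)
    rw [Finset.sum_const, Finset.card_range, smul_eq_mul] at h1
    have h2 : ∑ i ∈ Finset.range (m - 1), (T i).card
        = ((Finset.range (m - 1)).biUnion T).card := (Finset.card_biUnion hdisj).symm
    have h3 : ((Finset.range (m - 1)).biUnion T) ⊆ (P + P) ×ˢ (P + P) := by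
      intro t ht
      rw [Finset.mem_biUnion] at ht
      obtain ⟨i, hi, hti⟩ := ht
      rw [Finset.mem_range] at hi
      exact (hslope i (by omega) t hti).1
    calc (m - 1) * D ^ 2 ≤ ((Finset.range (m - 1)).biUnion T).card := by rw [← h2]; exact h1
    _ ≤ ((P + P) ×ˢ (P + P)).card := Finset.card_le_card h3
    _ = (P + P).card ^ 2 := by rw [Finset.card_product, sq]
  calc m * D ^ 2 ≤ 2 * ((m - 1) * D ^ 2) := by
        have : m ≤ 2 * (m - 1) := by omega
        calc m * D ^ 2 ≤ 2 * (m - 1) * D ^ 2 := Nat.mul_le_mul_right _ this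
        _ = 2 * ((m - 1) * D ^ 2) := by ring
  _ ≤ 2 * (P + P).card ^ 2 := Nat.mul_le_mul_left _ hsum


-- placeholders from previous chunks

theorem solymosi (P : Finset ℝ) (hP : ∀ x ∈ P, 0 < x) :
    (quadNZ P P).card ≤ 8 * (Nat.log 2 P.card + 1) * (P + P).card ^ 2 := by
  rw [quadNZ_card]
  set R := (P.erase 0) / (P.erase 0) with hR
  set J := Nat.log 2 P.card with hJ
  have hmaps : ∀ l ∈ R, Nat.log 2 (sfun P l) ∈ Finset.range (J + 1) := by
    intro l hl
    rw [Finset.mem_range, Nat.lt_succ_iff, hJ]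
    exact Nat.log_mono_right (sfun_le P l)
  rw [← Finset.sum_fiberwise_of_maps_to hmaps]
  have hbound : ∀ j ∈ Finset.range (J + 1),
      ∑ l ∈ R.filter (fun l => Nat.log 2 (sfun P l) = j), sfun P l * sfun P l
        ≤ 8 * (P + P).card ^ 2 := by
    intro j _
    set M := R.filter (fun l => Nat.log 2 (sfun P l) = j) with hM
    have hlow : ∀ l ∈ M, 2 ^ j ≤ sfun P l := by
      intro l hl
      rw [hM, Finset.mem_filter] at hl
      have h1 : sfun P l ≠ 0 := Nat.one_le_iff_ne_zero.1 (one_le_sfun P l hl.1)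
      calc 2 ^ j = 2 ^ Nat.log 2 (sfun P l) := by rw [hl.2]
      _ ≤ sfun P l := Nat.pow_log_le_self 2 h1
    have hhigh : ∀ l ∈ M, sfun P l ≤ 2 ^ (j + 1) := by
      intro l hl
      rw [hM, Finset.mem_filter] at hl
      calc sfun P l ≤ 2 ^ (Nat.log 2 (sfun P l) + 1) :=
        le_of_lt (Nat.lt_pow_succ_log_self (by norm_num) _)
      _ = 2 ^ (j + 1) := by rw [hl.2]
    calc ∑ l ∈ M, sfun P l * sfun P l ≤ ∑ _l ∈ M, 2 ^ (j + 1) * 2 ^ (j + 1) := by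
          apply Finset.sum_le_sum
          intro l hl
          exact Nat.mul_le_mul (hhigh l hl) (hhigh l hl)
    _ = M.card * (4 * (2 ^ j) ^ 2) := by
          rw [Finset.sum_const, smul_eq_mul]
          congr 1
          ring
    _ = 4 * (M.card * (2 ^ j) ^ 2) := by ring
    _ ≤ 4 * (2 * (P + P).card ^ 2) := by
          apply Nat.mul_le_mul_left
          exact key P hP M (2 ^ j) (Nat.one_le_two_pow) hlow
    _ = 8 * (P + P).card ^ 2 := by ring
  calc ∑ j ∈ Finset.range (J + 1), ∑ l ∈ R.filter (fun l => Nat.log 2 (sfun P l) = j),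
        sfun P l * sfun P l
      ≤ ∑ _j ∈ Finset.range (J + 1), 8 * (P + P).card ^ 2 := Finset.sum_le_sum hbound
  _ = (J + 1) * (8 * (P + P).card ^ 2) := by rw [Finset.sum_const, Finset.card_range, smul_eq_mul]
  _ = 8 * (J + 1) * (P + P).card ^ 2 := by ring

def absX (X : Finset ℝ) : Finset ℝ := (X.erase 0).image (fun x => |x|)

lemma absX_pos (X : Finset ℝ) : ∀ x ∈ absX X, 0 < x := by
  intro x hx
  rw [absX, Finset.mem_image] at hx
  obtain ⟨y, hy, rfl⟩ := hx
  rw [Finset.mem_erase] at hy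
  exact abs_pos.2 hy.1

lemma absX_card_le (X : Finset ℝ) : (absX X).card ≤ X.card :=
  le_trans (Finset.card_image_le) (Finset.card_le_card (Finset.erase_subset _ _))

lemma absX_subset (X : Finset ℝ) : absX X ⊆ X ∪ (-X) := by
  intro x hx
  rw [absX, Finset.mem_image] at hx
  obtain ⟨y, hy, rfl⟩ := hx
  rw [Finset.mem_erase] at hy
  rcases abs_choice y with h | h
  · rw [h]; exact Finset.mem_union_left _ hy.2
  · rw [h]; exact Finset.mem_union_right _ (Finset.neg_mem_neg hy.2)

lemma absX_add_card (X : Finset ℝ) :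
    (absX X + absX X).card ≤ 2 * (X + X).card + 2 * (X - X).card := by
  have h1 : absX X + absX X ⊆ (X ∪ -X) + (X ∪ -X) :=
    Finset.add_subset_add (absX_subset X) (absX_subset X)
  have h2 : (X ∪ -X) + (X ∪ -X) = ((X + X) ∪ (X + -X)) ∪ ((-X + X) ∪ (-X + -X)) := by
    rw [Finset.union_add, Finset.add_union, Finset.add_union]
  calc (absX X + absX X).card ≤ (((X + X) ∪ (X + -X)) ∪ ((-X + X) ∪ (-X + -X))).card := by
        rw [← h2]; exact Finset.card_le_card h1
  _ ≤ ((X + X) ∪ (X + -X)).card + ((-X + X) ∪ (-X + -X)).card := Finset.card_union_le _ _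
  _ ≤ ((X + X).card + (X + -X).card) + ((-X + X).card + (-X + -X).card) :=
      Nat.add_le_add (Finset.card_union_le _ _) (Finset.card_union_le _ _)
  _ = 2 * (X + X).card + 2 * (X - X).card := by
      have e1 : X + -X = X - X := (sub_eq_add_neg X X).symm
      have e2 : -X + X = X - X := by rw [add_comm, sub_eq_add_neg]
      have e3 : -X + -X = -(X + X) := by rw [neg_add_rev, add_comm]
      rw [e1, e2, e3, Finset.card_neg]
      ring

lemma quadNZ_abs_le (X : Finset ℝ) :
    (quadNZ X X).card ≤ 16 * (quadNZ (absX X) (absX X)).card := by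
  set F : ((ℝ × ℝ) × (ℝ × ℝ)) → ((ℝ × ℝ) × (ℝ × ℝ)) :=
    fun q => ((|q.1.1|, |q.1.2|), (|q.2.1|, |q.2.2|)) with hF
  have hmaps : ∀ q ∈ quadNZ X X, F q ∈ quadNZ (absX X) (absX X) := by
    intro q hq
    simp only [quadNZ, mem_filter, mem_product] at hq ⊢
    obtain ⟨⟨⟨hx, hy⟩, hx', hy'⟩, heq, hnz⟩ := hq
    have hx0 : q.1.1 ≠ 0 := fun h => hnz (by rw [h, zero_mul])
    have hy0 : q.1.2 ≠ 0 := fun h => hnz (by rw [h, mul_zero])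
    have hnz' : q.2.1 * q.2.2 ≠ 0 := by rw [← heq]; exact hnz
    have hx'0 : q.2.1 ≠ 0 := fun h => hnz' (by rw [h, zero_mul])
    have hy'0 : q.2.2 ≠ 0 := fun h => hnz' (by rw [h, mul_zero])
    have hmem : ∀ z : ℝ, z ∈ X → z ≠ 0 → |z| ∈ absX X := by
      intro z hz hz0
      rw [absX, Finset.mem_image]
      exact ⟨z, Finset.mem_erase.2 ⟨hz0, hz⟩, rfl⟩
    refine ⟨⟨⟨hmem _ hx hx0, hmem _ hy hy0⟩, hmem _ hx' hx'0, hmem _ hy' hy'0⟩, ?_, ?_⟩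
    · rw [← abs_mul, ← abs_mul, heq]
    · rw [← abs_mul]; exact abs_ne_zero.2 hnz
  have h16 : ∀ a ∈ (quadNZ X X).image F, ((quadNZ X X).filter fun q => F q = a).card ≤ 16 := by
    intro a _
    set S : Finset ((ℝ × ℝ) × (ℝ × ℝ)) :=
      (({a.1.1, -a.1.1} : Finset ℝ) ×ˢ ({a.1.2, -a.1.2} : Finset ℝ)) ×ˢ
        (({a.2.1, -a.2.1} : Finset ℝ) ×ˢ ({a.2.2, -a.2.2} : Finset ℝ)) with hS
    have hsub : ((quadNZ X X).filter fun q => F q = a) ⊆ S := by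
      intro q hq
      rw [Finset.mem_filter] at hq
      have h := hq.2
      have h1 : |q.1.1| = a.1.1 := congrArg (fun z => z.1.1) h
      have h2 : |q.1.2| = a.1.2 := congrArg (fun z => z.1.2) h
      have h3 : |q.2.1| = a.2.1 := congrArg (fun z => z.2.1) h
      have h4 : |q.2.2| = a.2.2 := congrArg (fun z => z.2.2) h
      have habs : ∀ z w : ℝ, |z| = w → z ∈ ({w, -w} : Finset ℝ) := by
        intro z w hw
        rcases abs_choice z with h | h
        · rw [h] at hw; rw [hw]; exact Finset.mem_insert_self _ _
        · rw [h] at hw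
          have : z = -w := by rw [← hw]; ring
          rw [this]
          exact Finset.mem_insert_of_mem (Finset.mem_singleton_self _)
      rw [hS]
      simp only [Finset.mem_product]
      exact ⟨⟨habs _ _ h1, habs _ _ h2⟩, habs _ _ h3, habs _ _ h4⟩
    calc ((quadNZ X X).filter fun q => F q = a).card
        ≤ S.card := Finset.card_le_card hsub
    _ ≤ 16 := by
        rw [hS, Finset.card_product, Finset.card_product, Finset.card_product]
        have hc : ∀ w : ℝ, ({w, -w} : Finset ℝ).card ≤ 2 := by
          intro w
          apply le_trans (Finset.card_insert_le _ _)
          simp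
        calc ({a.1.1, -a.1.1} : Finset ℝ).card * ({a.1.2, -a.1.2} : Finset ℝ).card *
              (({a.2.1, -a.2.1} : Finset ℝ).card * ({a.2.2, -a.2.2} : Finset ℝ).card)
            ≤ 2 * 2 * (2 * 2) := by
              apply Nat.mul_le_mul (Nat.mul_le_mul (hc _) (hc _)) (Nat.mul_le_mul (hc _) (hc _))
        _ = 16 := by norm_num
  calc (quadNZ X X).card ≤ 16 * ((quadNZ X X).image F).card :=
        Finset.card_le_mul_card_image _ 16 h16
  _ ≤ 16 * (quadNZ (absX X) (absX X)).card := by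
        apply Nat.mul_le_mul_left
        apply Finset.card_le_card
        intro a ha
        rw [Finset.mem_image] at ha
        obtain ⟨q, hq, rfl⟩ := ha
        exact hmaps q hq

def quadAdd (B : Finset ℝ) : Finset ((ℝ × ℝ) × (ℝ × ℝ)) :=
  ((B ×ˢ B) ×ˢ (B ×ˢ B)).filter fun q => q.1.1 + q.1.2 = q.2.1 + q.2.2

def rfun (B : Finset ℝ) (t : ℝ) : ℕ := ((B ×ˢ B).filter fun p => p.1 + p.2 = t).card

lemma rfun_sum (B : Finset ℝ) : ∑ t ∈ B + B, rfun B t = B.card ^ 2 := by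
  have h := Finset.card_eq_sum_card_fiberwise
    (f := fun p : ℝ × ℝ => p.1 + p.2) (s := B ×ˢ B) (t := B + B) ?_
  · simp only [rfun]
    rw [← h, Finset.card_product, sq]
  · intro p hp
    rw [Finset.mem_coe, Finset.mem_product] at hp
    exact Finset.add_mem_add hp.1 hp.2

lemma quadAdd_card (B : Finset ℝ) :
    (quadAdd B).card = ∑ t ∈ B + B, rfun B t * rfun B t := by
  rw [Finset.card_eq_sum_card_fiberwise (f := fun q => q.1.1 + q.1.2) (t := B + B)]
  · apply Finset.sum_congr rfl
    intro t _
    have hfib : (quadAdd B).filter (fun q => q.1.1 + q.1.2 = t)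
        = ((B ×ˢ B).filter fun p => p.1 + p.2 = t) ×ˢ ((B ×ˢ B).filter fun p => p.1 + p.2 = t) := by
      ext q
      simp only [quadAdd, Finset.mem_filter, Finset.mem_product]
      constructor
      · rintro ⟨⟨⟨h1, h2⟩, h3⟩, h4⟩
        exact ⟨⟨h1, h4⟩, h2, by rw [← h3, h4]⟩
      · rintro ⟨⟨h1, h4⟩, h2, h3⟩
        exact ⟨⟨⟨h1, h2⟩, by rw [h4, h3]⟩, h4⟩
    rw [hfib, Finset.card_product, rfun]
  · intro q hq
    simp only [Finset.mem_coe, quadAdd, Finset.mem_filter, Finset.mem_product] at hq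
    exact Finset.add_mem_add hq.1.1.1 hq.1.1.2

/-- Cauchy-Schwarz: B⁴ ≤ |B+B| · E₊(B) -/
lemma cs_lower (B : Finset ℝ) : B.card ^ 4 ≤ (B + B).card * (quadAdd B).card := by
  have h := sq_sum_le_card_mul_sum_sq (s := B + B) (f := fun t => (rfun B t : ℝ))
  have h1 : (∑ t ∈ B + B, (rfun B t : ℝ)) = (B.card : ℝ) ^ 2 := by
    rw [← Nat.cast_sum]
    exact_mod_cast congrArg (Nat.cast : ℕ → ℝ) (rfun_sum B)
  have h2 : (∑ t ∈ B + B, (rfun B t : ℝ) ^ 2) = ((quadAdd B).card : ℝ) := by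
    rw [quadAdd_card]
    push_cast
    apply Finset.sum_congr rfl
    intro t _
    ring
  rw [h1, h2] at h
  have : ((B.card : ℝ) ^ 2) ^ 2 = (B.card : ℝ) ^ 4 := by ring
  rw [this] at h
  exact_mod_cast h

/-- Link: E₊(A²) ≤ |A²|² + quadNZ (A-A) (A+A) -/
lemma link (A : Finset ℝ) :
    (quadAdd (A.image (fun a => a ^ 2))).card
      ≤ (A.image (fun a => a ^ 2)).card ^ 2 + (quadNZ (A - A) (A + A)).card := by
  classical
  set B := A.image (fun a => a ^ 2) with hB
  set g : ℝ → ℝ := fun b => if h : ∃ a, a ∈ A ∧ a ^ 2 = b then h.choose else 0 with hgdef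
  have hg : ∀ b ∈ B, g b ∈ A ∧ (g b) ^ 2 = b := by
    intro b hb
    rw [hB, Finset.mem_image] at hb
    obtain ⟨a, ha, rfl⟩ := hb
    have hex : ∃ x, x ∈ A ∧ x ^ 2 = a ^ 2 := ⟨a, ha, rfl⟩
    rw [hgdef]
    simp only [dif_pos hex]
    exact hex.choose_spec
  set Q0 := (quadAdd B).filter (fun q => q.1.1 = q.2.1) with hQ0
  set Q1 := (quadAdd B).filter (fun q => ¬ q.1.1 = q.2.1) with hQ1
  have hsplit : Q0.card + Q1.card = (quadAdd B).card :=
    Finset.card_filter_add_card_filter_not _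
  have hQ0le : Q0.card ≤ B.card ^ 2 := by
    rw [sq, ← Finset.card_product B B]
    apply Finset.card_le_card_of_injOn (fun q => q.1)
    · intro q hq
      rw [hQ0, Finset.mem_coe, Finset.mem_filter] at hq
      have := hq.1
      simp only [quadAdd, Finset.mem_filter, Finset.mem_product] at this
      exact Finset.mem_product.2 this.1.1
    · intro q hq q' hq' h
      rw [Finset.mem_coe, hQ0, Finset.mem_filter] at hq hq'
      have e1 := hq.2
      have e2 := hq'.2
      have s1 : q.1.1 + q.1.2 = q.2.1 + q.2.2 := by
        have := hq.1; simp only [quadAdd, Finset.mem_filter] at this; exact this.2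
      have s2 : q'.1.1 + q'.1.2 = q'.2.1 + q'.2.2 := by
        have := hq'.1; simp only [quadAdd, Finset.mem_filter] at this; exact this.2
      have h1 : q.1 = q'.1 := h
      have h22 : q.2.2 = q.1.2 := by rw [← e1] at s1; linarith
      have h22' : q'.2.2 = q'.1.2 := by rw [← e2] at s2; linarith
      apply Prod.ext h1
      apply Prod.ext
      · rw [← e1, ← e2, h1]
      · rw [h22, h22', h1]
  have hQ1le : Q1.card ≤ (quadNZ (A - A) (A + A)).card := by
    apply Finset.card_le_card_of_injOn
      (fun q => ((g q.1.1 - g q.2.1, g q.1.1 + g q.2.1), (g q.2.2 - g q.1.2, g q.2.2 + g q.1.2)))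
    · intro q hq
      rw [hQ1, Finset.mem_coe, Finset.mem_filter] at hq
      obtain ⟨hqa, hne⟩ := hq
      simp only [quadAdd, Finset.mem_filter, Finset.mem_product] at hqa
      obtain ⟨⟨⟨h1, h2⟩, h3, h4⟩, hsum⟩ := hqa
      obtain ⟨hg1, hg1'⟩ := hg _ h1
      obtain ⟨hg2, hg2'⟩ := hg _ h2
      obtain ⟨hg3, hg3'⟩ := hg _ h3
      obtain ⟨hg4, hg4'⟩ := hg _ h4
      simp only [Finset.mem_coe, quadNZ, Finset.mem_filter, Finset.mem_product]
      refine ⟨⟨⟨Finset.sub_mem_sub hg1 hg3, Finset.add_mem_add hg1 hg3⟩,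
        Finset.sub_mem_sub hg4 hg2, Finset.add_mem_add hg4 hg2⟩, ?_, ?_⟩
      · have : (g q.1.1 - g q.2.1) * (g q.1.1 + g q.2.1) = q.1.1 - q.2.1 := by
          have := hg1'; have := hg3'; nlinarith [hg1', hg3']
        rw [this]
        have : (g q.2.2 - g q.1.2) * (g q.2.2 + g q.1.2) = q.2.2 - q.1.2 := by
          nlinarith [hg4', hg2']
        rw [this]
        linarith [hsum]
      · have : (g q.1.1 - g q.2.1) * (g q.1.1 + g q.2.1) = q.1.1 - q.2.1 := by
          nlinarith [hg1', hg3']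
        rw [this]
        intro h0
        exact hne (by linarith [sub_eq_zero.1 h0])
    · intro q hq q' hq' h
      rw [Finset.mem_coe, hQ1, Finset.mem_filter] at hq hq'
      have hqa := hq.1
      have hqa' := hq'.1
      simp only [quadAdd, Finset.mem_filter, Finset.mem_product] at hqa hqa'
      obtain ⟨⟨⟨h1, h2⟩, h3, h4⟩, _⟩ := hqa
      obtain ⟨⟨⟨h1', h2'⟩, h3', h4'⟩, _⟩ := hqa'
      simp only [Prod.mk.injEq] at h
      obtain ⟨⟨e1, e2⟩, e3, e4⟩ := h
      have k1 : g q.1.1 = g q'.1.1 := by linarith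
      have k3 : g q.2.1 = g q'.2.1 := by linarith
      have k4 : g q.2.2 = g q'.2.2 := by linarith
      have k2 : g q.1.2 = g q'.1.2 := by linarith
      have b1 : q.1.1 = q'.1.1 := by rw [← (hg _ h1).2, ← (hg _ h1').2, k1]
      have b2 : q.1.2 = q'.1.2 := by rw [← (hg _ h2).2, ← (hg _ h2').2, k2]
      have b3 : q.2.1 = q'.2.1 := by rw [← (hg _ h3).2, ← (hg _ h3').2, k3]
      have b4 : q.2.2 = q'.2.2 := by rw [← (hg _ h4).2, ← (hg _ h4').2, k4]
      exact Prod.ext (Prod.ext b1 b2) (Prod.ext b3 b4)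
  omega


lemma nat_amgm (a b : ℕ) : 2 * (a * b) ≤ a * a + b * b := by
  have h : (2 : ℤ) * (a * b) ≤ (a : ℤ) * a + b * b := by nlinarith [sq_nonneg ((a : ℤ) - b)]
  exact_mod_cast h

lemma mixed_le (D S : Finset ℝ) :
    2 * (quadNZ D S).card ≤ (quadNZ D D).card + (quadNZ S S).card := by
  rw [quadNZ_card D S, quadNZ_card D D, quadNZ_card S S]
  set RD := (D.erase 0) / (D.erase 0) with hRD
  set RS := (S.erase 0) / (S.erase 0) with hRS
  have h1 : 2 * ∑ l ∈ RD, sfun D l * sfun S l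
      ≤ ∑ l ∈ RD, sfun D l * sfun D l + ∑ l ∈ RD, sfun S l * sfun S l := by
    rw [Finset.mul_sum, ← Finset.sum_add_distrib]
    apply Finset.sum_le_sum
    intro l _
    exact nat_amgm _ _
  have h2 : ∑ l ∈ RD, sfun S l * sfun S l ≤ ∑ l ∈ RS, sfun S l * sfun S l := by
    apply Finset.sum_le_sum_of_ne_zero
    intro l hl hne
    by_contra hnot
    have hl0 : l ≠ 0 := by
      rw [hRD, Finset.mem_div] at hl
      obtain ⟨a, ha, b, hb, rfl⟩ := hl
      rw [Finset.mem_erase] at ha hb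
      exact div_ne_zero ha.1 hb.1
    rw [sfun_eq_zero S l hl0 hnot] at hne
    simp at hne
  calc 2 * ∑ l ∈ RD, sfun D l * sfun S l
      ≤ ∑ l ∈ RD, sfun D l * sfun D l + ∑ l ∈ RD, sfun S l * sfun S l := h1
  _ ≤ ∑ l ∈ RD, sfun D l * sfun D l + ∑ l ∈ RS, sfun S l * sfun S l := Nat.add_le_add_left h2 _

lemma plun_sub (A : Finset ℝ) (hA : A.Nonempty) (K : ℝ) (hK : 0 ≤ K)
    (h : (#(A + A) : ℝ) ≤ K * #A) :
    ((#((A + A) - (A + A)) : ℝ) ≤ K ^ 4 * #A) ∧ ((#(A - A) : ℝ) ≤ K ^ 2 * #A) := by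
  have hA0 : (0 : ℝ) < #A := by exact_mod_cast Finset.card_pos.2 hA
  set q : ℚ≥0 := #(A + A) / #A with hq
  have hqK : (q : ℝ) ≤ K := by
    rw [hq]
    push_cast
    rw [div_le_iff₀ hA0]
    exact h
  have key : ∀ m n : ℕ, (#(m • A - n • A) : ℝ) ≤ K ^ (m + n) * #A := by
    intro m n
    have h1 := Finset.pluennecke_ruzsa_inequality_nsmul_sub_nsmul_add hA A m n
    have h2 : (#(m • A - n • A) : ℝ) ≤ (q : ℝ) ^ (m + n) * #A := by
      exact_mod_cast h1
    refine le_trans h2 ?_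
    apply mul_le_mul_of_nonneg_right _ (le_of_lt hA0)
    exact pow_le_pow_left₀ (by positivity) hqK _
  constructor
  · have := key 2 2
    rwa [two_nsmul] at this
  · have := key 1 1
    rwa [one_nsmul] at this

lemma plun_add (A : Finset ℝ) (hA : A.Nonempty) (K : ℝ) (hK : 0 ≤ K)
    (h : (#(A + A) : ℝ) ≤ K * #A) :
    (#((A + A) + (A + A)) : ℝ) ≤ K ^ 4 * #A := by
  have hA0 : (0 : ℝ) < #A := by exact_mod_cast Finset.card_pos.2 hA
  set q : ℚ≥0 := #(A + A) / #A with hq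
  have hqK : (q : ℝ) ≤ K := by
    rw [hq]; push_cast; rw [div_le_iff₀ hA0]; exact h
  have h1 := Finset.pluennecke_ruzsa_inequality_nsmul_add hA A 4
  have h2 : (#((4 : ℕ) • A) : ℝ) ≤ (q : ℝ) ^ 4 * #A := by exact_mod_cast h1
  have h3 : (4 : ℕ) • A = (A + A) + (A + A) := by
    rw [show (4 : ℕ) = 2 + 2 by rfl, add_nsmul, two_nsmul]
  rw [h3] at h2
  refine le_trans h2 ?_
  apply mul_le_mul_of_nonneg_right _ (le_of_lt hA0)
  exact pow_le_pow_left₀ (by positivity) hqK _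

lemma dsum_subset (A : Finset ℝ) : (A - A) + (A - A) ⊆ (A + A) - (A + A) := by
  intro x hx
  rw [Finset.mem_add] at hx
  obtain ⟨y, hy, z, hz, rfl⟩ := hx
  rw [Finset.mem_sub] at hy hz
  obtain ⟨a, ha, b, hb, rfl⟩ := hy
  obtain ⟨c, hc, d, hd, rfl⟩ := hz
  rw [Finset.mem_sub]
  exact ⟨a + c, Finset.add_mem_add ha hc, b + d, Finset.add_mem_add hb hd, by ring⟩

lemma ddiff_subset (A : Finset ℝ) : (A - A) - (A - A) ⊆ (A + A) - (A + A) := by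
  intro x hx
  rw [Finset.mem_sub] at hx
  obtain ⟨y, hy, z, hz, rfl⟩ := hx
  rw [Finset.mem_sub] at hy hz
  obtain ⟨a, ha, b, hb, rfl⟩ := hy
  obtain ⟨c, hc, d, hd, rfl⟩ := hz
  rw [Finset.mem_sub]
  exact ⟨a + d, Finset.add_mem_add ha hd, b + c, Finset.add_mem_add hb hc, by ring⟩

lemma sq_image_card (A : Finset ℝ) : #A ≤ 2 * #(A.image (fun a => a ^ 2)) := by
  apply Finset.card_le_mul_card_image
  intro v hv
  rw [Finset.mem_image] at hv
  obtain ⟨a₀, ha₀, rfl⟩ := hv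
  have hsub : (A.filter fun x => x ^ 2 = a₀ ^ 2) ⊆ {a₀, -a₀} := by
    intro x hx
    rw [Finset.mem_filter] at hx
    rcases sq_eq_sq_iff_eq_or_eq_neg.1 hx.2 with h | h
    · rw [h]; exact Finset.mem_insert_self _ _
    · rw [h]; exact Finset.mem_insert_of_mem (Finset.mem_singleton_self _)
  calc #(A.filter fun x => x ^ 2 = a₀ ^ 2) ≤ #({a₀, -a₀} : Finset ℝ) := Finset.card_le_card hsub
  _ ≤ 2 := by apply le_trans (Finset.card_insert_le _ _); simp


end

end SolAux

open SolAux in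
set_option maxHeartbeats 2000000 in
theorem stmt7 :
    ∃ c : ℝ, 0 < c ∧
      ∀ (A : Finset ℝ) (K : ℝ), 2 ≤ A.card → 1 ≤ K →
        ((A + A).card : ℝ) ≤ K * (A.card : ℝ) →
        c * (A.card : ℝ) ^ 2 / (K ^ 12 * Real.log (A.card : ℝ))
          ≤ ((A.image (fun a => a ^ 2) + A.image (fun a => a ^ 2)).card : ℝ) := by
  refine ⟨1 / 320000, by norm_num, ?_⟩
  intro A K hA2 hK1 hAA
  classical
  set n : ℝ := (A.card : ℝ) with hn
  have hn2 : (2 : ℝ) ≤ n := by rw [hn]; exact_mod_cast hA2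
  have hn0 : (0 : ℝ) < n := by linarith
  have hAne : A.Nonempty := Finset.card_pos.1 (by omega)
  have hK0 : (0 : ℝ) < K := by linarith
  set L : ℝ := Real.log n with hL
  have hl2 : (0.6931471803 : ℝ) < Real.log 2 := Real.log_two_gt_d9
  have hl2L : Real.log 2 ≤ L := Real.log_le_log (by norm_num) hn2
  have hL0 : 0 < L := by linarith
  set B := A.image (fun a => a ^ 2) with hB
  set D := A - A with hD
  set S := A + A with hS
  -- size bounds from Plünnecke-Ruzsa
  have hDle : (#D : ℝ) ≤ K ^ 2 * n := (plun_sub A hAne K (le_of_lt hK0) hAA).2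
  have hSd : (#(S - S) : ℝ) ≤ K ^ 4 * n := (plun_sub A hAne K (le_of_lt hK0) hAA).1
  have hSS : (#(S + S) : ℝ) ≤ K ^ 4 * n := plun_add A hAne K (le_of_lt hK0) hAA
  have hDD : (#(D + D) : ℝ) ≤ K ^ 4 * n := by
    refine le_trans ?_ hSd
    exact_mod_cast Nat.cast_le.2 (Finset.card_le_card (dsum_subset A))
  have hDd : (#(D - D) : ℝ) ≤ K ^ 4 * n := by
    refine le_trans ?_ hSd
    exact_mod_cast Nat.cast_le.2 (Finset.card_le_card (ddiff_subset A))
  -- absolute value sets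
  set D' := absX D with hD'
  set S' := absX S with hS'
  have hD'add : (#(D' + D') : ℝ) ≤ 4 * (K ^ 4 * n) := by
    have h := absX_add_card D
    have h' : (#(D' + D') : ℝ) ≤ 2 * #(D + D) + 2 * #(D - D) := by exact_mod_cast h
    linarith
  have hS'add : (#(S' + S') : ℝ) ≤ 4 * (K ^ 4 * n) := by
    have h := absX_add_card S
    have h' : (#(S' + S') : ℝ) ≤ 2 * #(S + S) + 2 * #(S - S) := by exact_mod_cast h
    linarith
  -- log factor bound
  have hlogfact : ∀ X' : Finset ℝ, (#X' : ℝ) ≤ K ^ 2 * n →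
      ((Nat.log 2 #X' : ℝ) + 1) ≤ 8 * K * L := by
    intro X' hX'
    have hKn1 : (1 : ℝ) ≤ K ^ 2 * n := by nlinarith
    have h1 : (Nat.log 2 #X' : ℝ) ≤ Real.logb 2 #X' := Real.natLog_le_logb _ _
    have h2 : Real.logb 2 (#X' : ℝ) ≤ Real.logb 2 (K ^ 2 * n) := by
      rcases Nat.eq_zero_or_pos #X' with h0 | hpos
      · rw [h0]
        have hz : ((0 : ℕ) : ℝ) = 0 := by norm_num
        rw [hz, Real.logb, Real.log_zero, zero_div]
        exact Real.logb_nonneg (by norm_num) hKn1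
      · exact Real.logb_le_logb_of_le (by norm_num) (by exact_mod_cast hpos) hX'
    have h3 : Real.logb 2 (K ^ 2 * n) = (2 * Real.log K + L) / Real.log 2 := by
      rw [Real.logb, Real.log_mul (by positivity) (by positivity), Real.log_pow, hL]
      push_cast
      ring_nf
    have hlogK : Real.log K ≤ K - 1 := Real.log_le_sub_one_of_pos hK0
    have hlogK0 : 0 ≤ Real.log K := Real.log_nonneg hK1
    have hl2' : (69/100 : ℝ) < Real.log 2 := by linarith
    have h4 : (2 * Real.log K + L) / Real.log 2 ≤ 8 * K * L - 1 := by
      rw [div_le_iff₀ (by linarith : (0:ℝ) < Real.log 2)]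
      have f1 : 0 ≤ K * (L - 69/100) := mul_nonneg (le_of_lt hK0) (by linarith)
      have f5 : 0 ≤ L * (K - 1) := mul_nonneg (le_of_lt hL0) (by linarith)
      have f2 : (0:ℝ) ≤ 8 * K * L - 1 := by nlinarith [f1]
      have f3 : (8 * K * L - 1) * (69/100) ≤ (8 * K * L - 1) * Real.log 2 :=
        mul_le_mul_of_nonneg_left (le_of_lt hl2') f2
      nlinarith [f1, f5, f3, hlogK, hK1]
    linarith [le_trans h1 h2, h3]
  -- Solymosi bound for each symmetric set
  have hsoly : ∀ X : Finset ℝ, (#(absX X) : ℝ) ≤ K ^ 2 * n →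
      (#(absX X + absX X) : ℝ) ≤ 4 * (K ^ 4 * n) →
      ((#(quadNZ X X) : ℝ)) ≤ 16384 * (K ^ 9 * L * n ^ 2) := by
    intro X hc ha
    have h1 : #(quadNZ X X) ≤ 16 * #(quadNZ (absX X) (absX X)) := quadNZ_abs_le X
    have h2 : #(quadNZ (absX X) (absX X))
        ≤ 8 * (Nat.log 2 #(absX X) + 1) * #(absX X + absX X) ^ 2 :=
      solymosi (absX X) (absX_pos X)
    have h3 : (#(quadNZ X X) : ℝ)
        ≤ 16 * (8 * ((Nat.log 2 #(absX X) : ℝ) + 1) * (#(absX X + absX X) : ℝ) ^ 2) := by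
      calc (#(quadNZ X X) : ℝ) ≤ 16 * (#(quadNZ (absX X) (absX X)) : ℝ) := by exact_mod_cast h1
      _ ≤ 16 * (8 * ((Nat.log 2 #(absX X) : ℝ) + 1) * (#(absX X + absX X) : ℝ) ^ 2) := by
          have := h2
          have hcast : (#(quadNZ (absX X) (absX X)) : ℝ)
              ≤ 8 * ((Nat.log 2 #(absX X) : ℝ) + 1) * (#(absX X + absX X) : ℝ) ^ 2 := by
            exact_mod_cast this
          linarith
    have h4 : ((Nat.log 2 #(absX X) : ℝ) + 1) ≤ 8 * K * L := hlogfact _ hc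
    calc (#(quadNZ X X) : ℝ)
        ≤ 16 * (8 * ((Nat.log 2 #(absX X) : ℝ) + 1) * (#(absX X + absX X) : ℝ) ^ 2) := h3
    _ ≤ 16 * (8 * (8 * K * L) * (4 * (K ^ 4 * n)) ^ 2) := by gcongr
    _ = 16384 * (K ^ 9 * L * n ^ 2) := by ring
  have hGD : (#(quadNZ D D) : ℝ) ≤ 16384 * (K ^ 9 * L * n ^ 2) := by
    apply hsoly D _ hD'add
    calc (#(absX D) : ℝ) ≤ (#D : ℝ) := by exact_mod_cast absX_card_le D
    _ ≤ K ^ 2 * n := hDle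
  have hGS : (#(quadNZ S S) : ℝ) ≤ 16384 * (K ^ 9 * L * n ^ 2) := by
    apply hsoly S _ hS'add
    calc (#(absX S) : ℝ) ≤ (#S : ℝ) := by exact_mod_cast absX_card_le S
    _ ≤ K * n := hAA
    _ ≤ K ^ 2 * n := by nlinarith
  -- mixed energy
  have hG : (#(quadNZ D S) : ℝ) ≤ 16384 * (K ^ 9 * L * n ^ 2) := by
    have h := mixed_le D S
    have h' : 2 * (#(quadNZ D S) : ℝ) ≤ (#(quadNZ D D) : ℝ) + (#(quadNZ S S) : ℝ) := by
      exact_mod_cast h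
    linarith
  -- additive energy of B
  have hb_le_n : (#B : ℝ) ≤ n := by
    rw [hn]
    exact_mod_cast Finset.card_image_le
  have hK9 : (1 : ℝ) ≤ K ^ 9 := one_le_pow₀ hK1
  have hE : (#(quadAdd B) : ℝ) ≤ 20000 * (K ^ 9 * L * n ^ 2) := by
    have h := link A
    have h' : (#(quadAdd B) : ℝ) ≤ (#B : ℝ) ^ 2 + (#(quadNZ D S) : ℝ) := by
      rw [hB, hD, hS]
      exact_mod_cast h
    have hb2 : (#B : ℝ) ^ 2 ≤ n ^ 2 := by
      apply pow_le_pow_left₀ (by positivity) hb_le_n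
    have hone : (1 : ℝ) ≤ 2 * (K ^ 9 * L) := by nlinarith
    have hn2K : n ^ 2 ≤ 2 * (K ^ 9 * L * n ^ 2) := by
      calc n ^ 2 = 1 * n ^ 2 := by ring
      _ ≤ (2 * (K ^ 9 * L)) * n ^ 2 := mul_le_mul_of_nonneg_right hone (sq_nonneg n)
      _ = 2 * (K ^ 9 * L * n ^ 2) := by ring
    linarith
  -- Cauchy-Schwarz
  have hCS : (#B : ℝ) ^ 4 ≤ (#(B + B) : ℝ) * (#(quadAdd B) : ℝ) := by
    exact_mod_cast cs_lower B
  have hQ0 : (0 : ℝ) ≤ (#(B + B) : ℝ) := by positivity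
  have hmain : (#B : ℝ) ^ 4 ≤ (#(B + B) : ℝ) * (20000 * (K ^ 9 * L * n ^ 2)) := by
    calc (#B : ℝ) ^ 4 ≤ (#(B + B) : ℝ) * (#(quadAdd B) : ℝ) := hCS
    _ ≤ (#(B + B) : ℝ) * (20000 * (K ^ 9 * L * n ^ 2)) := by
        apply mul_le_mul_of_nonneg_left hE hQ0
  have hnb : n ≤ 2 * (#B : ℝ) := by
    rw [hn]
    exact_mod_cast sq_image_card A
  have hn4 : n ^ 4 ≤ 16 * (#B : ℝ) ^ 4 := by
    have hb0 : (0 : ℝ) ≤ (#B : ℝ) := by positivity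
    calc n ^ 4 ≤ (2 * (#B : ℝ)) ^ 4 := by
          apply pow_le_pow_left₀ (by positivity) hnb
    _ = 16 * (#B : ℝ) ^ 4 := by ring
  have hfinal : n ^ 4 ≤ (#(B + B) : ℝ) * (320000 * (K ^ 9 * L * n ^ 2)) := by
    calc n ^ 4 ≤ 16 * (#B : ℝ) ^ 4 := hn4
    _ ≤ 16 * ((#(B + B) : ℝ) * (20000 * (K ^ 9 * L * n ^ 2))) := by linarith
    _ = (#(B + B) : ℝ) * (320000 * (K ^ 9 * L * n ^ 2)) := by ring
  -- conclude
  have hstep : n ^ 2 ≤ 320000 * (#(B + B) : ℝ) * (K ^ 9 * L) := by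
    have hn2pos : (0 : ℝ) < n ^ 2 := by positivity
    have := hfinal
    have h' : n ^ 2 * n ^ 2 ≤ (320000 * (#(B + B) : ℝ) * (K ^ 9 * L)) * n ^ 2 := by
      calc n ^ 2 * n ^ 2 = n ^ 4 := by ring
      _ ≤ (#(B + B) : ℝ) * (320000 * (K ^ 9 * L * n ^ 2)) := hfinal
      _ = (320000 * (#(B + B) : ℝ) * (K ^ 9 * L)) * n ^ 2 := by ring
    exact le_of_mul_le_mul_right h' hn2pos
  have hK912 : K ^ 9 ≤ K ^ 12 := pow_le_pow_right₀ hK1 (by norm_num)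
  have hstep2 : n ^ 2 ≤ 320000 * (#(B + B) : ℝ) * (K ^ 12 * L) := by
    calc n ^ 2 ≤ 320000 * (#(B + B) : ℝ) * (K ^ 9 * L) := hstep
    _ ≤ 320000 * (#(B + B) : ℝ) * (K ^ 12 * L) := by
        apply mul_le_mul_of_nonneg_left _ (by positivity)
        apply mul_le_mul_of_nonneg_right hK912 (le_of_lt hL0)
  rw [div_le_iff₀ (by positivity)]
  calc 1 / 320000 * n ^ 2 ≤ 1 / 320000 * (320000 * (#(B + B) : ℝ) * (K ^ 12 * L)) := by
        apply mul_le_mul_of_nonneg_left hstep2 (by norm_num)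
  _ = (#(B + B) : ℝ) * (K ^ 12 * L) := by ring
end

section
/- Let g, p, h ∈ ℝ[x] with deg g ≥ 2 and deg h ≥ 1, let f(x,y) = g(x + p(y)) + h(y), and let A, B ⊆ ℝ be finite sets. Define Q = {(a_1, a_2, b_1, b_2) ∈ A² × B² : f(a_1, b_1) = f(a_2, b_2)}. Then there exists a constant C > 0, depending only on deg f, such that the number of 4-tuples (a_1, a_2, b_1, b_2) ∈ Q for which the pair (b_1, b_2) is bad is at most C·|A||B|. -/
set_option linter.unusedSectionVars false
set_option maxHeartbeats 1000000



open Polynomial Finset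

/-- A bivariate real polynomial is reducible if it is a product of two nonconstant
polynomials. -/
def RedBiv (F : MvPolynomial (Fin 2) ℝ) : Prop :=
  ∃ F₁ F₂ : MvPolynomial (Fin 2) ℝ, F = F₁ * F₂ ∧ 1 ≤ F₁.totalDegree ∧ 1 ≤ F₂.totalDegree

/-- The bivariate polynomial `q(x) - q(y)`. -/
noncomputable def bivDiff (q : Polynomial ℝ) : MvPolynomial (Fin 2) ℝ :=
  Polynomial.aeval (MvPolynomial.X 0) q - Polynomial.aeval (MvPolynomial.X 1) q

/-- The pair `(b₁, b₂)` is bad if `g(x) - g(y) + h(b₁) - h(b₂)` or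
`h(x) - h(y) + h(b₁) - h(b₂)` is reducible in `ℝ[x, y]`. -/
def Bad (g h : Polynomial ℝ) (b₁ b₂ : ℝ) : Prop :=
  RedBiv (bivDiff g + MvPolynomial.C (h.eval b₁ - h.eval b₂)) ∨
  RedBiv (bivDiff h + MvPolynomial.C (h.eval b₁ - h.eval b₂))

/-- `f(x, y) = g(x + p(y)) + h(y)`. -/
noncomputable def fval (g p h : Polynomial ℝ) (x y : ℝ) : ℝ :=
  g.eval (x + p.eval y) + h.eval y



namespace LeadAux

open MvPolynomial

variable {R : Type*} [CommRing R] [IsDomain R] {σ : Type*}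

/-- top homogeneous component -/
noncomputable def lead (p : MvPolynomial σ R) : MvPolynomial σ R :=
  homogeneousComponent p.totalDegree p

lemma lead_isHomogeneous (p : MvPolynomial σ R) : (lead p).IsHomogeneous p.totalDegree :=
  homogeneousComponent_isHomogeneous _ _

lemma lead_ne_zero {p : MvPolynomial σ R} (hp : p ≠ 0) : lead p ≠ 0 := by
  obtain ⟨d, hd, hdeg⟩ := p.support.exists_mem_eq_sup
    (MvPolynomial.support_nonempty.mpr hp) (fun s => s.sum fun _ e => e)
  have hdd : d.degree = p.totalDegree := by
    rw [totalDegree, hdeg, Finsupp.degree, Finsupp.sum]; rfl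
  intro h
  have : coeff d (lead p) = coeff d p := by
    rw [lead, coeff_homogeneousComponent, if_pos hdd]
  rw [h] at this
  exact (mem_support_iff.mp hd) (by simpa using this.symm)

lemma totalDegree_lead_le (p : MvPolynomial σ R) : (lead p).totalDegree ≤ p.totalDegree :=
  (lead_isHomogeneous p).totalDegree_le

lemma coeff_sub_lead (p : MvPolynomial σ R) (d : σ →₀ ℕ) :
    coeff d (p - lead p) = if d.degree = p.totalDegree then 0 else coeff d p := by
  rw [MvPolynomial.coeff_sub, lead, coeff_homogeneousComponent]
  split <;> simp

lemma sub_lead (p : MvPolynomial σ R) :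
    p - lead p = 0 ∨ (p - lead p).totalDegree < p.totalDegree := by
  by_cases h0 : p - lead p = 0
  · exact Or.inl h0
  right
  have hsup : ∀ d ∈ (p - lead p).support, (d.sum fun _ e => e) < p.totalDegree := by
    intro d hd
    rw [MvPolynomial.mem_support_iff, coeff_sub_lead] at hd
    have hne : d.degree ≠ p.totalDegree := by
      intro h; rw [if_pos h] at hd; exact hd rfl
    have hmem : d ∈ p.support := by
      rw [if_neg hne] at hd; exact MvPolynomial.mem_support_iff.mpr hd
    have hle := le_totalDegree hmem
    have : d.degree = d.sum fun _ e => e := by rw [Finsupp.degree, Finsupp.sum]; rfl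
    omega
  have hpos : 0 < p.totalDegree := by
    obtain ⟨d, hd⟩ := MvPolynomial.support_nonempty.mpr h0
    exact lt_of_le_of_lt (Nat.zero_le _) (hsup d hd)
  rw [totalDegree]
  exact Finset.sup_lt_iff (by simpa using hpos) |>.mpr hsup

lemma lead_eq_of_decomp {p L Rr : MvPolynomial σ R} {n : ℕ} (hL : L.IsHomogeneous n)
    (hLne : L ≠ 0) (hR : Rr = 0 ∨ Rr.totalDegree < n) (hp : p = L + Rr) :
    p.totalDegree = n ∧ lead p = L := by
  have hcnR : homogeneousComponent n Rr = 0 := by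
    rcases hR with h | h
    · rw [h, map_zero]
    · exact homogeneousComponent_eq_zero _ _ h
  have hcn : homogeneousComponent n p = L := by
    rw [hp, map_add, homogeneousComponent_of_mem ((mem_homogeneousSubmodule _ _).mpr hL),
      if_pos rfl, hcnR, add_zero]
  have hge : n ≤ p.totalDegree := by
    by_contra hlt
    exact hLne (by rw [← hcn, homogeneousComponent_eq_zero _ _ (by omega)])
  have hle : p.totalDegree ≤ n := by
    rw [hp]
    refine le_trans (totalDegree_add _ _) ?_
    rcases hR with h | h
    · simp [h, hL.totalDegree_le]
    · simp [hL.totalDegree_le, le_of_lt h]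
  have ht : p.totalDegree = n := le_antisymm hle hge
  exact ⟨ht, by rw [lead, ht, hcn]⟩

lemma mul_decomp (p q : MvPolynomial σ R) (hp : p ≠ 0) (hq : q ≠ 0) :
    (p * q).totalDegree = p.totalDegree + q.totalDegree ∧ lead (p * q) = lead p * lead q := by
  set dp := p.totalDegree
  set dq := q.totalDegree
  have hlp := lead_ne_zero hp
  have hlq := lead_ne_zero hq
  have hLL : (lead p * lead q).IsHomogeneous (dp + dq) :=
    (lead_isHomogeneous p).mul (lead_isHomogeneous q)
  have hLLne : lead p * lead q ≠ 0 := mul_ne_zero hlp hlq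
  have hdecomp : p * q = lead p * lead q + ((p - lead p) * q + lead p * (q - lead q)) := by ring
  have hrest : ((p - lead p) * q + lead p * (q - lead q)).totalDegree < dp + dq ∨
      ((p - lead p) * q + lead p * (q - lead q)) = 0 := by
    have h1 : (p - lead p) * q = 0 ∨ ((p - lead p) * q).totalDegree < dp + dq := by
      rcases sub_lead p with h | h
      · exact Or.inl (by rw [h, zero_mul])
      · right
        calc ((p - lead p) * q).totalDegree ≤ (p - lead p).totalDegree + dq :=
              totalDegree_mul _ _
          _ < dp + dq := by omega
    have h2 : lead p * (q - lead q) = 0 ∨ (lead p * (q - lead q)).totalDegree < dp + dq := by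
      rcases sub_lead q with h | h
      · exact Or.inl (by rw [h, mul_zero])
      · right
        calc (lead p * (q - lead q)).totalDegree ≤ (lead p).totalDegree +
              (q - lead q).totalDegree := totalDegree_mul _ _
          _ < dp + dq := by
              have := totalDegree_lead_le p
              omega
    rcases h1 with h1 | h1 <;> rcases h2 with h2 | h2
    · exact Or.inr (by rw [h1, h2, add_zero])
    · left; rw [h1, zero_add]; exact h2
    · left; rw [h2, add_zero]; exact h1
    · left; exact lt_of_le_of_lt (totalDegree_add _ _) (by omega)
  rcases hrest with h | h
  · exact lead_eq_of_decomp hLL hLLne (Or.inr h) hdecomp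
  · exact lead_eq_of_decomp hLL hLLne (Or.inl h) hdecomp

end LeadAux

namespace LeadAux

open MvPolynomial

variable {k : Type*} [Field k]

lemma not_unit_combo {F₁ F₂ : MvPolynomial (Fin 2) k}
    (h₁ : 1 ≤ F₁.totalDegree) (h₂ : 1 ≤ F₂.totalDegree)
    (hrel : IsRelPrime (lead F₁) (lead F₂)) :
    ¬ ∃ u v, u * F₁ + v * F₂ = 1 := by
  have hF₁ : F₁ ≠ 0 := fun h => by simp [h] at h₁
  have hF₂ : F₂ ≠ 0 := fun h => by simp [h] at h₂
  -- impossible to have v * F₂ = 1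
  have hunit₂ : ∀ v, ¬ v * F₂ = 1 := by
    intro v hv
    have hvne : v ≠ 0 := by rintro rfl; simp at hv
    have := (mul_decomp v F₂ hvne hF₂).1
    rw [hv] at this
    simp at this
    omega
  have hunit₁ : ∀ u, ¬ u * F₁ = 1 := by
    intro u hu
    have hune : u ≠ 0 := by rintro rfl; simp at hu
    have := (mul_decomp u F₁ hune hF₁).1
    rw [hu] at this
    simp at this
    omega
  rintro ⟨u, v, huv⟩
  -- strong induction on totalDegree of u
  suffices H : ∀ N : ℕ, ∀ u v : MvPolynomial (Fin 2) k,
      u.totalDegree ≤ N → u * F₁ + v * F₂ = 1 → False by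
    exact H u.totalDegree u v le_rfl huv
  clear huv u v
  intro N
  induction N using Nat.strong_induction_on with
  | _ N ih =>
    intro u v hN huv
    by_cases hu0 : u = 0
    · subst hu0; rw [zero_mul, zero_add] at huv; exact hunit₂ v huv
    by_cases hv0 : v = 0
    · subst hv0; rw [zero_mul, add_zero] at huv; exact hunit₁ u huv
    have hdu := mul_decomp u F₁ hu0 hF₁
    have hdv := mul_decomp v F₂ hv0 hF₂
    set du := u.totalDegree + F₁.totalDegree with hdudef
    set dv := v.totalDegree + F₂.totalDegree with hdvdef
    have hdu1 : 1 ≤ du := by omega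
    have hdv1 : 1 ≤ dv := by omega
    -- homogeneous components of the equation
    have hhc : ∀ m, 1 ≤ m →
        homogeneousComponent m (u * F₁) + homogeneousComponent m (v * F₂) = 0 := by
      intro m hm
      have := congrArg (homogeneousComponent m) huv
      rw [map_add] at this
      rw [this]
      exact homogeneousComponent_eq_zero _ _ (by simp; omega)
    have hcu : homogeneousComponent du (u * F₁) = lead u * lead F₁ := by
      rw [← hdu.2, lead, hdu.1]
    have hcv : homogeneousComponent dv (v * F₂) = lead v * lead F₂ := by
      rw [← hdv.2, lead, hdv.1]
    have hlune : lead u * lead F₁ ≠ 0 := mul_ne_zero (lead_ne_zero hu0) (lead_ne_zero hF₁)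
    have hlvne : lead v * lead F₂ ≠ 0 := mul_ne_zero (lead_ne_zero hv0) (lead_ne_zero hF₂)
    have hdudv : du = dv := by
      by_contra hne
      rcases Nat.lt_or_ge du dv with h | h
      · have h2 := hhc dv hdv1
        have hz : homogeneousComponent dv (u * F₁) = 0 :=
          homogeneousComponent_eq_zero _ _ (by rw [hdu.1]; exact h)
        rw [hz, zero_add, hcv] at h2
        exact hlvne h2
      · have hlt : dv < du := by omega
        have h2 := hhc du hdu1
        have hz : homogeneousComponent du (v * F₂) = 0 :=
          homogeneousComponent_eq_zero _ _ (by rw [hdv.1]; exact hlt)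
        rw [hz, add_zero, hcu] at h2
        exact hlune h2
    have hsum : lead u * lead F₁ + lead v * lead F₂ = 0 := by
      have h2 := hhc du hdu1
      rw [hcu, hdudv, hcv] at h2
      exact h2
    -- lead F₂ divides lead u
    have hdvd : lead F₂ ∣ lead u * lead F₁ := ⟨-(lead v), by linear_combination hsum⟩
    have hdvdu : lead F₂ ∣ lead u := hrel.symm.dvd_of_dvd_mul_right hdvd
    obtain ⟨W, hW⟩ := hdvdu
    have hWne : W ≠ 0 := by
      rintro rfl; rw [mul_zero] at hW; exact lead_ne_zero hu0 hW
    have hlF₂ne := lead_ne_zero hF₂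
    have htW : u.totalDegree = F₂.totalDegree + W.totalDegree := by
      have h1 : (lead u).totalDegree = u.totalDegree :=
        (lead_isHomogeneous u).totalDegree (lead_ne_zero hu0)
      have h2 : (lead F₂).totalDegree = F₂.totalDegree :=
        (lead_isHomogeneous F₂).totalDegree hlF₂ne
      have := (mul_decomp (lead F₂) W hlF₂ne hWne).1
      rw [← hW, h1, h2] at this
      exact this
    -- the new pair
    set u' := u - W * F₂ with hu'def
    set v' := v + W * F₁ with hv'def
    have huv' : u' * F₁ + v' * F₂ = 1 := by
      rw [hu'def, hv'def]; linear_combination huv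
    have hu'small : u' = 0 ∨ u'.totalDegree < u.totalDegree := by
      by_cases h0 : u' = 0
      · exact Or.inl h0
      right
      have hrepr : u' = (u - lead u) + (-(W * (F₂ - lead F₂))) := by
        rw [hu'def, hW]; ring
      have hb1 : (u - lead u) = 0 ∨ (u - lead u).totalDegree < u.totalDegree := sub_lead u
      have hb2 : W * (F₂ - lead F₂) = 0 ∨ (W * (F₂ - lead F₂)).totalDegree < u.totalDegree := by
        rcases sub_lead F₂ with h | h
        · exact Or.inl (by rw [h, mul_zero])
        · right
          calc (W * (F₂ - lead F₂)).totalDegree ≤ W.totalDegree + (F₂ - lead F₂).totalDegree :=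
                totalDegree_mul _ _
            _ < u.totalDegree := by omega
      have := totalDegree_add (u - lead u) (-(W * (F₂ - lead F₂)))
      rw [← hrepr, totalDegree_neg] at this
      rcases hb1 with h1 | h1 <;> rcases hb2 with h2 | h2
      · exfalso; apply h0; rw [hrepr, h1, h2]; simp
      · rw [hrepr, h1, zero_add, totalDegree_neg]; exact h2
      · have : u' = u - lead u := by rw [hrepr, h2]; ring
        rw [this]; exact h1
      · exact lt_of_le_of_lt this (sup_lt_iff.mpr ⟨h1, h2⟩)
    rcases hu'small with h0 | hlt
    · rw [h0, zero_mul, zero_add] at huv'; exact hunit₂ v' huv'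
    · exact ih u'.totalDegree (by omega) u' v' le_rfl huv'

end LeadAux

namespace LeadAux

open MvPolynomial

variable {k : Type*} [Field k]

lemma exists_common_zero [IsAlgClosed k] {F₁ F₂ : MvPolynomial (Fin 2) k}
    (h₁ : 1 ≤ F₁.totalDegree) (h₂ : 1 ≤ F₂.totalDegree)
    (hrel : IsRelPrime (lead F₁) (lead F₂)) :
    ∃ x : Fin 2 → k, eval x F₁ = 0 ∧ eval x F₂ = 0 := by
  set I : Ideal (MvPolynomial (Fin 2) k) := Ideal.span {F₁, F₂} with hI
  by_cases hz : (MvPolynomial.zeroLocus k I).Nonempty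
  · obtain ⟨x, hx⟩ := hz
    refine ⟨x, ?_, ?_⟩
    · exact hx F₁ (Ideal.subset_span (by simp))
    · exact hx F₂ (Ideal.subset_span (by simp))
  · exfalso
    have hempty : MvPolynomial.zeroLocus k I = ∅ := Set.not_nonempty_iff_eq_empty.mp hz
    have hrad : I.radical = ⊤ := by
      rw [← MvPolynomial.vanishingIdeal_zeroLocus_eq_radical (K := k), hempty]
      rw [eq_top_iff]
      intro p _
      rw [MvPolynomial.mem_vanishingIdeal_iff]
      intro x hx
      exact absurd hx (by simp)
    have hone : (1 : MvPolynomial (Fin 2) k) ∈ I := by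
      have : (1 : MvPolynomial (Fin 2) k) ∈ I.radical := by rw [hrad]; trivial
      obtain ⟨n, hn⟩ := this
      simpa using hn
    rw [hI, Ideal.mem_span_pair] at hone
    exact not_unit_combo h₁ h₂ hrel hone

/-- `X 0 ^ n - X 1 ^ n` over an algebraically-closed... actually any field of char 0 -/
lemma squarefree_aux [CharZero k] {n : ℕ} (hn : 1 ≤ n) (dd : MvPolynomial (Fin 2) k)
    (hdvd : dd * dd ∣ (X 0 : MvPolynomial (Fin 2) k) ^ n - (X 1) ^ n) : IsUnit dd := by
  set e := MvPolynomial.finSuccEquiv k 1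
  set B := MvPolynomial (Fin 1) k
  set u : B := (X 0) ^ n with hu
  have hu0 : u ≠ 0 := pow_ne_zero _ (MvPolynomial.X_ne_zero 0)
  have himg : e ((X 0 : MvPolynomial (Fin 2) k) ^ n - (X 1) ^ n)
      = Polynomial.X ^ n - Polynomial.C u := by
    rw [map_sub, map_pow, map_pow]
    rw [MvPolynomial.finSuccEquiv_X_zero]
    have h1 : e (X 1) = Polynomial.C (X 0 : B) := by
      have : (1 : Fin 2) = (0 : Fin 1).succ := rfl
      rw [this, MvPolynomial.finSuccEquiv_X_succ]
    rw [h1, ← Polynomial.C_pow]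
  set d' := e dd with hd'
  have hdvd' : d' * d' ∣ Polynomial.X ^ n - Polynomial.C u := by
    rw [← himg, ← map_mul]
    exact (AlgEquiv.toRingEquiv e).toRingHom.map_dvd hdvd
  -- move to the fraction field
  set K := FractionRing B
  have halg : Function.Injective (algebraMap B K) := IsFractionRing.injective B K
  set φ : Polynomial B →+* Polynomial K := Polynomial.mapRingHom (algebraMap B K) with hφ
  have hφinj : Function.Injective φ := Polynomial.map_injective _ halg
  set u' : K := algebraMap B K u with hu'
  have hu'0 : u' ≠ 0 := fun h => hu0 (halg (by rw [map_zero]; exact h))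
  have hP : φ (Polynomial.X ^ n - Polynomial.C u) = Polynomial.X ^ n - Polynomial.C u' := by
    simp [hφ, hu']
  have hnK : (n : K) ≠ 0 := Nat.cast_ne_zero.mpr (by omega)
  have hsep : (Polynomial.X ^ n - Polynomial.C u' : Polynomial K).Separable := by
    unfold Polynomial.Separable
    rw [Polynomial.derivative_sub, Polynomial.derivative_C, Polynomial.derivative_X_pow,
      sub_zero]
    refine ⟨-Polynomial.C u'⁻¹, Polynomial.C ((n : K) * u')⁻¹ * Polynomial.X, ?_⟩
    have hXn : (Polynomial.X : Polynomial K) ^ n = Polynomial.X ^ (n - 1) * Polynomial.X := by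
      rw [← pow_succ]; congr 1; omega
    have e1 : (Polynomial.C ((↑n * u')⁻¹) * Polynomial.C (↑n : K) : Polynomial K)
        = Polynomial.C (u'⁻¹) := by
      rw [← Polynomial.C_mul]; congr 1; rw [mul_inv, mul_comm, ← mul_assoc, mul_inv_cancel₀ hnK, one_mul]
    have e2 : Polynomial.C u'⁻¹ * Polynomial.C u' = (1 : Polynomial K) := by
      rw [← Polynomial.C_mul, inv_mul_cancel₀ hu'0, Polynomial.C_1]
    calc -Polynomial.C u'⁻¹ * (Polynomial.X ^ n - Polynomial.C u') +
          Polynomial.C (↑n * u')⁻¹ * Polynomial.X * (Polynomial.C ↑n * Polynomial.X ^ (n - 1))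
        = -Polynomial.C u'⁻¹ * (Polynomial.X ^ n - Polynomial.C u') +
          (Polynomial.C (↑n * u')⁻¹ * Polynomial.C ↑n) * (Polynomial.X ^ (n-1) * Polynomial.X) := by
            ring
      _ = -Polynomial.C u'⁻¹ * (Polynomial.X ^ n - Polynomial.C u') +
          Polynomial.C u'⁻¹ * Polynomial.X ^ n := by rw [e1, ← hXn]
      _ = Polynomial.C u'⁻¹ * Polynomial.C u' := by ring
      _ = 1 := e2
  have hsq : Squarefree (Polynomial.X ^ n - Polynomial.C u' : Polynomial K) := hsep.squarefree
  have hunit'' : IsUnit (φ d') := by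
    apply hsq
    rw [← hP, ← map_mul]
    exact map_dvd φ hdvd'
  obtain ⟨r, hr, hrC⟩ := Polynomial.isUnit_iff.mp hunit''
  have hdeg : d'.natDegree = 0 := by
    have hnd := Polynomial.natDegree_map_eq_of_injective halg d'
    have h0 : ((Polynomial.mapRingHom (algebraMap B K)) d').natDegree = 0 := by
      rw [← hrC]; simp
    rwa [Polynomial.coe_mapRingHom, hnd] at h0
  obtain ⟨b₀, hb₀⟩ := Polynomial.natDegree_eq_zero.mp hdeg
  obtain ⟨qq, hqq⟩ := hdvd'
  have hcoeff : (1 : B) = b₀ * b₀ * qq.coeff n := by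
    have hc := congrArg (fun p => Polynomial.coeff p n) hqq
    rw [Polynomial.coeff_sub, Polynomial.coeff_X_pow, if_pos rfl, Polynomial.coeff_C,
      if_neg (by omega), sub_zero] at hc
    rw [← hb₀, ← Polynomial.C_mul, Polynomial.coeff_C_mul] at hc
    exact hc
  have hbunit : IsUnit b₀ :=
    IsUnit.of_mul_eq_one (a := b₀) (b₀ * qq.coeff n) (by rw [← mul_assoc]; exact hcoeff.symm)
  have hd'unit : IsUnit d' := by rw [← hb₀]; exact hbunit.map Polynomial.C
  have hdd : dd = e.symm d' := by rw [hd']; simp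
  rw [hdd]
  exact hd'unit.map e.symm.toAlgHom

end LeadAux

namespace LeadAux

open MvPolynomial

variable {k : Type*} [Field k]

lemma totalDegree_aeval_X_le (i : Fin 2) (r : Polynomial k) :
    (Polynomial.aeval (X i : MvPolynomial (Fin 2) k) r).totalDegree ≤ r.natDegree := by
  rw [Polynomial.aeval_eq_sum_range]
  refine le_trans (totalDegree_finset_sum _ _) ?_
  refine Finset.sup_le fun j hj => ?_
  refine le_trans (totalDegree_smul_le _ _) ?_
  refine le_trans (totalDegree_pow _ _) ?_
  rw [totalDegree_X]
  rw [Finset.mem_range] at hj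
  omega

set_option maxHeartbeats 1000000 in
lemma biv_decomp (Q : Polynomial k) (hn : 1 ≤ Q.natDegree) (c : k) :
    (Polynomial.aeval (X 0 : MvPolynomial (Fin 2) k) Q
        - Polynomial.aeval (X 1 : MvPolynomial (Fin 2) k) Q + MvPolynomial.C c).totalDegree
      = Q.natDegree ∧
    lead (Polynomial.aeval (X 0 : MvPolynomial (Fin 2) k) Q
        - Polynomial.aeval (X 1 : MvPolynomial (Fin 2) k) Q + MvPolynomial.C c)
      = MvPolynomial.C Q.leadingCoeff * ((X 0 : MvPolynomial (Fin 2) k) ^ Q.natDegree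
          - (X 1) ^ Q.natDegree) := by
  set n := Q.natDegree
  set a := Q.leadingCoeff with ha
  have hQ0 : Q ≠ 0 := fun h => by simp [h, n] at hn
  have ha0 : a ≠ 0 := Polynomial.leadingCoeff_ne_zero.mpr hQ0
  set L : MvPolynomial (Fin 2) k := MvPolynomial.C a * ((X 0) ^ n - (X 1) ^ n) with hL
  set er := Q.eraseLead with her
  have haeval : ∀ i : Fin 2, Polynomial.aeval (X i : MvPolynomial (Fin 2) k) Q
      = Polynomial.aeval (X i : MvPolynomial (Fin 2) k) er
        + MvPolynomial.C a * (X i) ^ n := by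
    intro i
    conv_lhs => rw [← Q.eraseLead_add_C_mul_X_pow]
    rw [map_add, map_mul, map_pow, Polynomial.aeval_X, Polynomial.aeval_C,
      MvPolynomial.algebraMap_eq]
  have hdecomp : Polynomial.aeval (X 0 : MvPolynomial (Fin 2) k) Q
      - Polynomial.aeval (X 1 : MvPolynomial (Fin 2) k) Q + MvPolynomial.C c
      = L + (Polynomial.aeval (X 0 : MvPolynomial (Fin 2) k) er
          - Polynomial.aeval (X 1 : MvPolynomial (Fin 2) k) er + MvPolynomial.C c) := by
    rw [haeval 0, haeval 1, hL]; ring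
  have hLhom : L.IsHomogeneous n := by
    rw [hL, mul_sub]
    rw [← mem_homogeneousSubmodule]
    exact sub_mem ((mem_homogeneousSubmodule _ _).mpr (isHomogeneous_C_mul_X_pow a 0 n))
      ((mem_homogeneousSubmodule _ _).mpr (isHomogeneous_C_mul_X_pow a 1 n))
  have hLne : L ≠ 0 := by
    intro h
    have hc : coeff (Finsupp.single 0 n) L = a := by
      rw [hL, MvPolynomial.coeff_C_mul, MvPolynomial.coeff_sub, MvPolynomial.coeff_X_pow, MvPolynomial.coeff_X_pow,
        if_pos rfl, if_neg, sub_zero, mul_one]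
      intro heq
      have h0 := congrArg (fun f => f (0 : Fin 2)) heq
      simp [Finsupp.single_apply] at h0
      omega
    rw [h] at hc
    simp at hc
    exact ha0 hc.symm
  have hRlt : (Polynomial.aeval (X 0 : MvPolynomial (Fin 2) k) er
      - Polynomial.aeval (X 1 : MvPolynomial (Fin 2) k) er + MvPolynomial.C c).totalDegree
      < n := by
    have h1 := totalDegree_aeval_X_le (k := k) 0 er
    have h2 := totalDegree_aeval_X_le (k := k) 1 er
    have her1 : er.natDegree ≤ n - 1 := Q.eraseLead_natDegree_le
    refine lt_of_le_of_lt (totalDegree_add _ _) ?_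
    rw [max_lt_iff]
    constructor
    · rw [sub_eq_add_neg]
      refine lt_of_le_of_lt (totalDegree_add _ _) ?_
      rw [max_lt_iff, totalDegree_neg]
      omega
    · rw [totalDegree_C]; omega
  have := lead_eq_of_decomp (R := k) hLhom hLne (Or.inr hRlt) hdecomp
  exact ⟨this.1, this.2⟩

lemma totalDegree_map_eq {K L : Type*} [Field K] [Field L] (f : K →+* L)
    (p : MvPolynomial (Fin 2) K) :
    (MvPolynomial.map f p).totalDegree = p.totalDegree := by
  rw [totalDegree, totalDegree, MvPolynomial.support_map_of_injective p f.injective]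

end LeadAux

namespace LeadAux

open MvPolynomial

lemma map_aeval_X {K L : Type*} [Field K] [Field L] (f : K →+* L) (i : Fin 2)
    (q : Polynomial K) :
    MvPolynomial.map f (Polynomial.aeval (X i : MvPolynomial (Fin 2) K) q)
      = Polynomial.aeval (X i : MvPolynomial (Fin 2) L) (q.map f) := by
  have h1 : (MvPolynomial.map f).comp (MvPolynomial.C : K →+* MvPolynomial (Fin 2) K)
      = (MvPolynomial.C : L →+* MvPolynomial (Fin 2) L).comp f :=
    RingHom.ext fun r => by simp
  rw [Polynomial.aeval_def, MvPolynomial.algebraMap_eq, Polynomial.aeval_def,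
    MvPolynomial.algebraMap_eq, Polynomial.hom_eval₂, Polynomial.eval₂_map, h1,
    MvPolynomial.map_X]

lemma red_implies_critical (q : Polynomial ℝ) (hq : 1 ≤ q.natDegree) (c : ℝ)
    (hred : RedBiv (bivDiff q + MvPolynomial.C c)) :
    ∃ α β : ℂ,
      (q.map (algebraMap ℝ ℂ)).derivative.eval α = 0 ∧
      (q.map (algebraMap ℝ ℂ)).derivative.eval β = 0 ∧
      ((c : ℂ)) = (q.map (algebraMap ℝ ℂ)).eval β - (q.map (algebraMap ℝ ℂ)).eval α := by
  set Q : Polynomial ℂ := q.map (algebraMap ℝ ℂ) with hQdef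
  have hQdeg : Q.natDegree = q.natDegree :=
    Polynomial.natDegree_map_eq_of_injective (algebraMap ℝ ℂ).injective q
  have hQn : 1 ≤ Q.natDegree := by omega
  obtain ⟨F₁, F₂, hF, h1, h2⟩ := hred
  set G₁ := MvPolynomial.map (algebraMap ℝ ℂ) F₁ with hG₁def
  set G₂ := MvPolynomial.map (algebraMap ℝ ℂ) F₂ with hG₂def
  set G : MvPolynomial (Fin 2) ℂ := Polynomial.aeval (X 0) Q - Polynomial.aeval (X 1) Q
      + MvPolynomial.C (c : ℂ) with hGdef
  have hmap : MvPolynomial.map (algebraMap ℝ ℂ) (bivDiff q + MvPolynomial.C c) = G := by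
    rw [hGdef, bivDiff, map_add, map_sub, map_aeval_X, map_aeval_X, MvPolynomial.map_C]
    rfl
  have hG : G = G₁ * G₂ := by rw [← hmap, hF, map_mul]
  have htG₁ : 1 ≤ G₁.totalDegree := by rw [hG₁def, totalDegree_map_eq]; exact h1
  have htG₂ : 1 ≤ G₂.totalDegree := by rw [hG₂def, totalDegree_map_eq]; exact h2
  have hG₁0 : G₁ ≠ 0 := fun h => by simp [h] at htG₁
  have hG₂0 : G₂ ≠ 0 := fun h => by simp [h] at htG₂
  have hbd := biv_decomp Q hQn (c : ℂ)
  have ha0 : Q.leadingCoeff ≠ 0 :=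
    Polynomial.leadingCoeff_ne_zero.mpr (fun h => by simp [h] at hQn)
  have hlead : lead G₁ * lead G₂ = MvPolynomial.C Q.leadingCoeff
      * ((X 0 : MvPolynomial (Fin 2) ℂ) ^ Q.natDegree - (X 1) ^ Q.natDegree) := by
    rw [← (mul_decomp G₁ G₂ hG₁0 hG₂0).2, ← hG, hGdef, hbd.2]
  have hrel : IsRelPrime (lead G₁) (lead G₂) := by
    intro dd hd1 hd2
    have hdd : dd * dd ∣ MvPolynomial.C Q.leadingCoeff
        * ((X 0 : MvPolynomial (Fin 2) ℂ) ^ Q.natDegree - (X 1) ^ Q.natDegree) := by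
      rw [← hlead]; exact mul_dvd_mul hd1 hd2
    have hdd' : dd * dd ∣ ((X 0 : MvPolynomial (Fin 2) ℂ) ^ Q.natDegree
        - (X 1) ^ Q.natDegree) := by
      have h' := hdd.mul_left (MvPolynomial.C Q.leadingCoeff⁻¹)
      rwa [← mul_assoc, ← MvPolynomial.C_mul, inv_mul_cancel₀ ha0, MvPolynomial.C_1,
        one_mul] at h'
    exact squarefree_aux hQn dd hdd'
  obtain ⟨x, hx1, hx2⟩ := exists_common_zero htG₁ htG₂ hrel
  set α := x 0 with hα
  set β := x 1 with hβ
  -- first substitution hom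
  set Φ : MvPolynomial (Fin 2) ℂ →+* Polynomial ℂ :=
    eval₂Hom (Polynomial.C) (fun i => if i = 0 then Polynomial.X else Polynomial.C β) with hΦ
  have hΦC : ∀ z : ℂ, Φ (MvPolynomial.C z) = Polynomial.C z := fun z => by
    simp [hΦ]
  have hΦcomp : Φ.comp (MvPolynomial.C : ℂ →+* MvPolynomial (Fin 2) ℂ)
      = (Polynomial.C : ℂ →+* Polynomial ℂ) := RingHom.ext fun z => hΦC z
  have hΦa0 : Φ (Polynomial.aeval (X 0) Q) = Q := by
    rw [Polynomial.aeval_def, MvPolynomial.algebraMap_eq, Polynomial.hom_eval₂, hΦcomp]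
    have hX : Φ (X 0) = Polynomial.X := by simp [hΦ]
    rw [hX, Polynomial.eval₂_C_X]
  have hΦa1 : Φ (Polynomial.aeval (X 1) Q) = Polynomial.C (Q.eval β) := by
    rw [Polynomial.aeval_def, MvPolynomial.algebraMap_eq, Polynomial.hom_eval₂, hΦcomp]
    have hX : Φ (X 1) = Polynomial.C β := by
      rw [hΦ, eval₂Hom_X']
      norm_num
    rw [hX, Polynomial.eval₂_at_apply]
  have hΦG : Φ G = Q - Polynomial.C (Q.eval β) + Polynomial.C (c : ℂ) := by
    rw [hGdef, map_add, map_sub, hΦa0, hΦa1, hΦC]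
  have heval : ∀ H : MvPolynomial (Fin 2) ℂ, Polynomial.eval α (Φ H) = MvPolynomial.eval x H := by
    intro H
    have hcomp : (Polynomial.evalRingHom α).comp Φ = (MvPolynomial.eval x : _ →+* ℂ) := by
      apply MvPolynomial.ringHom_ext
      · intro r; simp [hΦ]
      · intro i
        fin_cases i
        · simp [hΦ, hα]
        · simp [hΦ, hβ]
    have := congrFun (congrArg (DFunLike.coe) hcomp) H
    simpa using this
  have hP1 : Polynomial.eval α (Φ G₁) = 0 := by rw [heval]; exact hx1
  have hP2 : Polynomial.eval α (Φ G₂) = 0 := by rw [heval]; exact hx2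
  have hΦmul : Φ G = Φ G₁ * Φ G₂ := by rw [hG, map_mul]
  have hderG : Polynomial.derivative (Φ G) = Q.derivative := by
    rw [hΦG]; simp
  have hQ'α : Q.derivative.eval α = 0 := by
    rw [← hderG, hΦmul, Polynomial.derivative_mul]
    simp [hP1, hP2]
  have hceq : Q.eval α - Q.eval β + (c : ℂ) = 0 := by
    have h0 : Polynomial.eval α (Φ G) = 0 := by rw [hΦmul]; simp [hP1]
    rw [hΦG] at h0
    simpa using h0
  -- second substitution hom
  set Ψ : MvPolynomial (Fin 2) ℂ →+* Polynomial ℂ :=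
    eval₂Hom (Polynomial.C) (fun i => if i = 0 then Polynomial.C α else Polynomial.X) with hΨ
  have hΨC : ∀ z : ℂ, Ψ (MvPolynomial.C z) = Polynomial.C z := fun z => by simp [hΨ]
  have hΨcomp : Ψ.comp (MvPolynomial.C : ℂ →+* MvPolynomial (Fin 2) ℂ)
      = (Polynomial.C : ℂ →+* Polynomial ℂ) := RingHom.ext fun z => hΨC z
  have hΨa0 : Ψ (Polynomial.aeval (X 0) Q) = Polynomial.C (Q.eval α) := by
    rw [Polynomial.aeval_def, MvPolynomial.algebraMap_eq, Polynomial.hom_eval₂, hΨcomp]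
    have hX : Ψ (X 0) = Polynomial.C α := by simp [hΨ]
    rw [hX, Polynomial.eval₂_at_apply]
  have hΨa1 : Ψ (Polynomial.aeval (X 1) Q) = Q := by
    rw [Polynomial.aeval_def, MvPolynomial.algebraMap_eq, Polynomial.hom_eval₂, hΨcomp]
    have hX : Ψ (X 1) = Polynomial.X := by
      rw [hΨ, eval₂Hom_X']
      norm_num
    rw [hX, Polynomial.eval₂_C_X]
  have hΨG : Ψ G = Polynomial.C (Q.eval α) - Q + Polynomial.C (c : ℂ) := by
    rw [hGdef, map_add, map_sub, hΨa0, hΨa1, hΨC]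
  have hevalβ : ∀ H : MvPolynomial (Fin 2) ℂ,
      Polynomial.eval β (Ψ H) = MvPolynomial.eval x H := by
    intro H
    have hcomp : (Polynomial.evalRingHom β).comp Ψ = (MvPolynomial.eval x : _ →+* ℂ) := by
      apply MvPolynomial.ringHom_ext
      · intro r; simp [hΨ]
      · intro i
        fin_cases i
        · simp [hΨ, hα]
        · simp [hΨ, hβ]
    have := congrFun (congrArg (DFunLike.coe) hcomp) H
    simpa using this
  have hP1' : Polynomial.eval β (Ψ G₁) = 0 := by rw [hevalβ]; exact hx1
  have hP2' : Polynomial.eval β (Ψ G₂) = 0 := by rw [hevalβ]; exact hx2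
  have hΨmul : Ψ G = Ψ G₁ * Ψ G₂ := by rw [hG, map_mul]
  have hderG' : Polynomial.derivative (Ψ G) = -Q.derivative := by
    rw [hΨG]; simp
  have hQ'β : Q.derivative.eval β = 0 := by
    have h0 : Polynomial.eval β (Polynomial.derivative (Ψ G)) = 0 := by
      rw [hΨmul, Polynomial.derivative_mul]
      simp [hP1', hP2']
    rw [hderG'] at h0
    simpa using h0
  exact ⟨α, β, hQ'α, hQ'β, by linear_combination hceq⟩


end LeadAux

/-- The finite set of possible "bad constants" associated with a polynomial. -/
noncomputable def critSet (q : Polynomial ℝ) : Finset ℝ :=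
  (((q.map (algebraMap ℝ ℂ)).derivative.roots.toFinset ×ˢ
      (q.map (algebraMap ℝ ℂ)).derivative.roots.toFinset).image
    fun z => ((q.map (algebraMap ℝ ℂ)).eval z.2 - (q.map (algebraMap ℝ ℂ)).eval z.1).re)

lemma critSet_card_le (q : Polynomial ℝ) {d : ℕ} (hd : q.natDegree ≤ d) :
    (critSet q).card ≤ d ^ 2 := by
  refine le_trans (Finset.card_image_le) ?_
  rw [Finset.card_product]
  have hr : (q.map (algebraMap ℝ ℂ)).derivative.roots.toFinset.card ≤ d := by
    refine le_trans (Multiset.toFinset_card_le _) ?_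
    refine le_trans (Polynomial.card_roots' _) ?_
    refine le_trans (Polynomial.natDegree_derivative_le _) ?_
    rw [Polynomial.natDegree_map_eq_of_injective (algebraMap ℝ ℂ).injective]
    omega
  calc _ ≤ d * d := Nat.mul_le_mul hr hr
    _ = d ^ 2 := (sq d).symm

lemma mem_critSet (q : Polynomial ℝ) (hq : 1 ≤ q.natDegree) (hq2 : 2 ≤ q.natDegree ∨
    q.natDegree = 1) (c : ℝ)
    (hred : RedBiv (bivDiff q + MvPolynomial.C c)) : c ∈ critSet q := by
  obtain ⟨α, β, hα, hβ, hc⟩ := LeadAux.red_implies_critical q hq c hred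
  have hD : (q.map (algebraMap ℝ ℂ)).derivative ≠ 0 := by
    intro h0
    have := Polynomial.natDegree_eq_zero_of_derivative_eq_zero h0
    rw [Polynomial.natDegree_map_eq_of_injective (algebraMap ℝ ℂ).injective] at this
    omega
  refine Finset.mem_image.mpr ⟨(α, β), Finset.mem_product.mpr ⟨?_, ?_⟩, ?_⟩
  · rw [Multiset.mem_toFinset, Polynomial.mem_roots']; exact ⟨hD, hα⟩
  · rw [Multiset.mem_toFinset, Polynomial.mem_roots']; exact ⟨hD, hβ⟩
  · rw [← hc, Complex.ofReal_re]

theorem stmt12 (d : ℕ) :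
    ∃ C : ℝ, 0 < C ∧
      ∀ g p h : Polynomial ℝ,
        g.natDegree ≤ d → p.natDegree ≤ d → h.natDegree ≤ d →
        2 ≤ g.natDegree → 1 ≤ h.natDegree →
        ∀ A B : Finset ℝ,
          (({q : ℝ × ℝ × ℝ × ℝ |
              ∃ a₁ a₂ b₁ b₂ : ℝ, q = (a₁, a₂, b₁, b₂) ∧
                a₁ ∈ A ∧ a₂ ∈ A ∧ b₁ ∈ B ∧ b₂ ∈ B ∧
                fval g p h a₁ b₁ = fval g p h a₂ b₂ ∧
                Bad g h b₁ b₂}).ncard : ℝ)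
            ≤ C * (A.card : ℝ) * (B.card : ℝ) := by
  classical
  refine ⟨2 * (d : ℝ) ^ 4 + 1, by positivity, ?_⟩
  intro g p h hgd hpd hhd hg2 hh1 A B
  set S' : Finset ℝ := critSet g ∪ critSet h with hS'
  have hS'card : S'.card ≤ 2 * d ^ 2 := by
    refine le_trans (Finset.card_union_le _ _) ?_
    have := critSet_card_le g hgd
    have := critSet_card_le h hhd
    omega
  have hSmem : ∀ b₁ b₂ : ℝ, Bad g h b₁ b₂ → h.eval b₁ - h.eval b₂ ∈ S' := by
    intro b₁ b₂ hbad
    rcases hbad with hb | hb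
    · exact Finset.mem_union_left _ (mem_critSet g (by omega) (Or.inl hg2) _ hb)
    · exact Finset.mem_union_right _ (mem_critSet h hh1 (by omega) _ hb)
  -- candidate sets
  set badB : ℝ → Finset ℝ := fun b₂ =>
    S'.biUnion (fun c => (h - Polynomial.C (h.eval b₂ + c)).roots.toFinset) with hbadB
  set aset : ℝ → ℝ → Finset ℝ := fun v b₂ =>
    ((g.comp (Polynomial.X + Polynomial.C (p.eval b₂))) - Polynomial.C v).roots.toFinset
    with haset
  set bigF : Finset (ℝ × ℝ × ℝ × ℝ) := (A ×ˢ B).biUnion (fun ab =>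
    (badB ab.2).biUnion (fun b₁ =>
      (aset (fval g p h ab.1 b₁ - h.eval ab.2) ab.2).image
        (fun a₂ => (ab.1, a₂, b₁, ab.2)))) with hbigF
  -- nonzeroness facts
  have hhne : ∀ y c : ℝ, h - Polynomial.C (h.eval y + c) ≠ 0 := by
    intro y c h0
    have : (h - Polynomial.C (h.eval y + c)).natDegree = h.natDegree :=
      Polynomial.natDegree_sub_C
    rw [h0] at this
    simp at this
    omega
  have hgcompdeg : ∀ y v : ℝ,
      ((g.comp (Polynomial.X + Polynomial.C (p.eval y))) - Polynomial.C v).natDegree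
        = g.natDegree := by
    intro y v
    rw [Polynomial.natDegree_sub_C, Polynomial.natDegree_comp, Polynomial.natDegree_X_add_C,
      mul_one]
  have hgne : ∀ y v : ℝ,
      (g.comp (Polynomial.X + Polynomial.C (p.eval y))) - Polynomial.C v ≠ 0 := by
    intro y v h0
    have := hgcompdeg y v
    rw [h0] at this
    simp at this
    omega
  -- inclusion
  have hsub : {q : ℝ × ℝ × ℝ × ℝ |
      ∃ a₁ a₂ b₁ b₂ : ℝ, q = (a₁, a₂, b₁, b₂) ∧
        a₁ ∈ A ∧ a₂ ∈ A ∧ b₁ ∈ B ∧ b₂ ∈ B ∧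
        fval g p h a₁ b₁ = fval g p h a₂ b₂ ∧
        Bad g h b₁ b₂} ⊆ (bigF : Set (ℝ × ℝ × ℝ × ℝ)) := by
    rintro _ ⟨a₁, a₂, b₁, b₂, rfl, ha₁, ha₂, hb₁, hb₂, hfeq, hbad⟩
    rw [Finset.mem_coe, hbigF]
    apply Finset.mem_biUnion.mpr
    refine ⟨(a₁, b₂), Finset.mem_product.mpr ⟨ha₁, hb₂⟩, ?_⟩
    apply Finset.mem_biUnion.mpr
    have hb₁mem : b₁ ∈ badB b₂ := by
      rw [hbadB]
      apply Finset.mem_biUnion.mpr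
      refine ⟨h.eval b₁ - h.eval b₂, hSmem b₁ b₂ hbad, ?_⟩
      rw [Multiset.mem_toFinset, Polynomial.mem_roots']
      refine ⟨hhne b₂ _, ?_⟩
      simp [Polynomial.IsRoot]
    refine ⟨b₁, hb₁mem, ?_⟩
    apply Finset.mem_image.mpr
    refine ⟨a₂, ?_, rfl⟩
    rw [haset]
    rw [Multiset.mem_toFinset, Polynomial.mem_roots']
    refine ⟨hgne b₂ _, ?_⟩
    have : g.eval (a₂ + p.eval b₂) = fval g p h a₁ b₁ - h.eval b₂ := by
      simp only [fval] at hfeq ⊢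
      linarith
    simp [Polynomial.IsRoot, Polynomial.eval_comp, this]
  -- cardinality bounds
  have hbadBcard : ∀ b₂, (badB b₂).card ≤ 2 * d ^ 2 * d := by
    intro b₂
    rw [hbadB]
    refine le_trans (Finset.card_biUnion_le) ?_
    have hone : ∀ c : ℝ, ((h - Polynomial.C (h.eval b₂ + c)).roots.toFinset).card ≤ d := by
      intro c
      refine le_trans (Multiset.toFinset_card_le _) ?_
      refine le_trans (Polynomial.card_roots' _) ?_
      rw [Polynomial.natDegree_sub_C]
      omega
    calc ∑ c ∈ S', ((h - Polynomial.C (h.eval b₂ + c)).roots.toFinset).card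
        ≤ ∑ _c ∈ S', d := Finset.sum_le_sum (fun c _ => hone c)
      _ = S'.card * d := by rw [Finset.sum_const, smul_eq_mul]
      _ ≤ 2 * d ^ 2 * d := Nat.mul_le_mul_right _ hS'card
  have hasetcard : ∀ v b₂, (aset v b₂).card ≤ d := by
    intro v b₂
    rw [haset]
    refine le_trans (Multiset.toFinset_card_le _) ?_
    refine le_trans (Polynomial.card_roots' _) ?_
    rw [hgcompdeg]
    omega
  have hbigFcard : bigF.card ≤ A.card * B.card * (2 * d ^ 4) := by
    rw [hbigF]
    refine le_trans (Finset.card_biUnion_le) ?_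
    have hinner : ∀ ab : ℝ × ℝ, ((badB ab.2).biUnion (fun b₁ =>
        (aset (fval g p h ab.1 b₁ - h.eval ab.2) ab.2).image
          (fun a₂ => (ab.1, a₂, b₁, ab.2)))).card ≤ 2 * d ^ 4 := by
      intro ab
      refine le_trans (Finset.card_biUnion_le) ?_
      calc ∑ b₁ ∈ badB ab.2, ((aset (fval g p h ab.1 b₁ - h.eval ab.2) ab.2).image
            (fun a₂ => (ab.1, a₂, b₁, ab.2))).card
          ≤ ∑ _b₁ ∈ badB ab.2, d := by
            refine Finset.sum_le_sum (fun b₁ _ => ?_)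
            exact le_trans (Finset.card_image_le) (hasetcard _ _)
        _ = (badB ab.2).card * d := by rw [Finset.sum_const, smul_eq_mul]
        _ ≤ (2 * d ^ 2 * d) * d := Nat.mul_le_mul_right _ (hbadBcard _)
        _ = 2 * d ^ 4 := by ring
    calc ∑ ab ∈ A ×ˢ B, ((badB ab.2).biUnion (fun b₁ =>
          (aset (fval g p h ab.1 b₁ - h.eval ab.2) ab.2).image
            (fun a₂ => (ab.1, a₂, b₁, ab.2)))).card
        ≤ ∑ _ab ∈ A ×ˢ B, 2 * d ^ 4 := Finset.sum_le_sum (fun ab _ => hinner ab)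
      _ = (A ×ˢ B).card * (2 * d ^ 4) := by rw [Finset.sum_const, smul_eq_mul]
      _ = A.card * B.card * (2 * d ^ 4) := by rw [Finset.card_product]
  have hncard : ({q : ℝ × ℝ × ℝ × ℝ |
      ∃ a₁ a₂ b₁ b₂ : ℝ, q = (a₁, a₂, b₁, b₂) ∧
        a₁ ∈ A ∧ a₂ ∈ A ∧ b₁ ∈ B ∧ b₂ ∈ B ∧
        fval g p h a₁ b₁ = fval g p h a₂ b₂ ∧
        Bad g h b₁ b₂}).ncard ≤ bigF.card := by
    rw [← Set.ncard_coe_finset]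
    exact Set.ncard_le_ncard hsub (Finset.finite_toSet _)
  have htotal : ({q : ℝ × ℝ × ℝ × ℝ |
      ∃ a₁ a₂ b₁ b₂ : ℝ, q = (a₁, a₂, b₁, b₂) ∧
        a₁ ∈ A ∧ a₂ ∈ A ∧ b₁ ∈ B ∧ b₂ ∈ B ∧
        fval g p h a₁ b₁ = fval g p h a₂ b₂ ∧
        Bad g h b₁ b₂}).ncard ≤ A.card * B.card * (2 * d ^ 4) := le_trans hncard hbigFcard
  have hcast : (({q : ℝ × ℝ × ℝ × ℝ |
      ∃ a₁ a₂ b₁ b₂ : ℝ, q = (a₁, a₂, b₁, b₂) ∧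
        a₁ ∈ A ∧ a₂ ∈ A ∧ b₁ ∈ B ∧ b₂ ∈ B ∧
        fval g p h a₁ b₁ = fval g p h a₂ b₂ ∧
        Bad g h b₁ b₂}).ncard : ℝ) ≤ (A.card : ℝ) * (B.card : ℝ) * (2 * (d : ℝ) ^ 4) := by
    have := htotal
    exact_mod_cast Nat.cast_le.mpr this |>.trans (by push_cast; ring_nf; exact le_refl _)
  calc (({q : ℝ × ℝ × ℝ × ℝ |
      ∃ a₁ a₂ b₁ b₂ : ℝ, q = (a₁, a₂, b₁, b₂) ∧
        a₁ ∈ A ∧ a₂ ∈ A ∧ b₁ ∈ B ∧ b₂ ∈ B ∧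
        fval g p h a₁ b₁ = fval g p h a₂ b₂ ∧
        Bad g h b₁ b₂}).ncard : ℝ)
      ≤ (A.card : ℝ) * (B.card : ℝ) * (2 * (d : ℝ) ^ 4) := hcast
    _ ≤ (2 * (d : ℝ) ^ 4 + 1) * (A.card : ℝ) * (B.card : ℝ) := by nlinarith [Nat.cast_nonneg (α := ℝ) A.card, Nat.cast_nonneg (α := ℝ) B.card, pow_nonneg (Nat.cast_nonneg (α := ℝ) d) 4]
end

section
/- For every nonconstant single-variable polynomial p ∈ ℝ[x], the bivariate polynomial p(x) − p(y) ∈ ℝ[x,y] is indecomposable; that is, it cannot be written as q(r(x,y)) for any polynomials r ∈ ℝ[x,y] and q ∈ ℝ[z] with deg q ≥ 2. -/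
open Polynomial

namespace Stmt13Aux

abbrev A2 : Type := MvPolynomial (Fin 2) ℝ

lemma aevalX_injective (i : Fin 2) :
    Function.Injective (Polynomial.aeval (MvPolynomial.X i : A2) : Polynomial ℝ → A2) := by
  have h : Function.LeftInverse
      (MvPolynomial.aeval (fun j : Fin 2 => if j = i then Polynomial.X else 0) :
        A2 →ₐ[ℝ] Polynomial ℝ)
      (Polynomial.aeval (MvPolynomial.X i : A2) : Polynomial ℝ → A2) := by
    intro g
    rw [← Polynomial.aeval_algHom_apply]
    simp
  exact h.injective

lemma pderiv_poly_aeval (i : Fin 2) (x : A2) (g : Polynomial ℝ) :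
    MvPolynomial.pderiv i (Polynomial.aeval x g)
      = Polynomial.aeval x (derivative g) * MvPolynomial.pderiv i x := by
  rw [Derivation.map_aeval, smul_eq_mul]

lemma degreeOf0_mul_left {a b f : A2} (hab : a * b = f)
    (hf : MvPolynomial.degreeOf 0 f = 0) (ha : a ≠ 0) (hb : b ≠ 0) :
    MvPolynomial.degreeOf 0 a = 0 := by
  have ha' : (MvPolynomial.finSuccEquiv ℝ 1) a ≠ 0 := by
    simpa using ha
  have hb' : (MvPolynomial.finSuccEquiv ℝ 1) b ≠ 0 := by
    simpa using hb
  have hmul := Polynomial.natDegree_mul ha' hb'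
  rw [← map_mul, hab, MvPolynomial.natDegree_finSuccEquiv, hf,
    MvPolynomial.natDegree_finSuccEquiv, MvPolynomial.natDegree_finSuccEquiv] at hmul
  omega

lemma degreeOf1_eq (x : A2) :
    MvPolynomial.degreeOf 1 x
      = MvPolynomial.degreeOf 0 (MvPolynomial.rename (Equiv.swap (0 : Fin 2) 1) x) := by
  have h := MvPolynomial.degreeOf_rename_of_injective
    (Equiv.swap (0 : Fin 2) 1).injective (p := x) 1
  simpa [Equiv.swap_apply_right] using h.symm

lemma degreeOf1_mul_left {a b f : A2} (hab : a * b = f)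
    (hf : MvPolynomial.degreeOf 1 f = 0) (ha : a ≠ 0) (hb : b ≠ 0) :
    MvPolynomial.degreeOf 1 a = 0 := by
  rw [degreeOf1_eq] at hf ⊢
  refine degreeOf0_mul_left (a := MvPolynomial.rename (Equiv.swap (0 : Fin 2) 1) a)
    (b := MvPolynomial.rename (Equiv.swap (0 : Fin 2) 1) b) ?_ hf ?_ ?_
  · rw [← map_mul, hab]
  · exact fun h => ha (MvPolynomial.rename_injective _ (Equiv.swap _ _).injective
      (by rw [h, map_zero]))
  · exact fun h => hb (MvPolynomial.rename_injective _ (Equiv.swap _ _).injective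
      (by rw [h, map_zero]))

lemma eq_C_of_degreeOf (d : A2) (h0 : MvPolynomial.degreeOf 0 d = 0)
    (h1 : MvPolynomial.degreeOf 1 d = 0) :
    d = MvPolynomial.C (MvPolynomial.coeff 0 d) := by
  ext m
  rcases eq_or_ne m 0 with rfl | hm
  · simp
  · rw [MvPolynomial.coeff_C, if_neg (Ne.symm hm)]
    by_contra hc
    have hs : m ∈ d.support := MvPolynomial.mem_support_iff.2 hc
    apply hm
    ext i
    fin_cases i
    · exact Nat.le_zero.1 (h0 ▸ MvPolynomial.monomial_le_degreeOf 0 hs)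
    · exact Nat.le_zero.1 (h1 ▸ MvPolynomial.monomial_le_degreeOf 1 hs)

lemma degreeOf0_aevalX1 (g : Polynomial ℝ) :
    MvPolynomial.degreeOf 0 (Polynomial.aeval (MvPolynomial.X 1 : A2) g) = 0 := by
  rw [← MvPolynomial.natDegree_finSuccEquiv]
  have h1 : (MvPolynomial.finSuccEquiv ℝ 1) (Polynomial.aeval (MvPolynomial.X 1 : A2) g)
      = Polynomial.aeval ((MvPolynomial.finSuccEquiv ℝ 1) (MvPolynomial.X 1 : A2)) g :=
    (Polynomial.aeval_algHom_apply _ _ _).symm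
  have h2 : (MvPolynomial.finSuccEquiv ℝ 1) (MvPolynomial.X 1 : A2)
      = Polynomial.C (MvPolynomial.X 0) := by
    have : (1 : Fin 2) = Fin.succ 0 := rfl
    rw [this, MvPolynomial.finSuccEquiv_X_succ]
  have h3 : Polynomial.aeval (Polynomial.C (MvPolynomial.X 0 : MvPolynomial (Fin 1) ℝ)) g
      = Polynomial.C (Polynomial.aeval (MvPolynomial.X 0 : MvPolynomial (Fin 1) ℝ) g) := by
    have h := Polynomial.aeval_algHom_apply
      (Polynomial.CAlgHom (R := ℝ) (A := MvPolynomial (Fin 1) ℝ))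
      (MvPolynomial.X 0) g
    have hCA : ∀ x : MvPolynomial (Fin 1) ℝ,
        Polynomial.CAlgHom (R := ℝ) x = Polynomial.C x := fun x => rfl
    rw [← hCA, ← hCA]
    exact h
  rw [h1, h2, h3, Polynomial.natDegree_C]

lemma degreeOf1_aevalX0 (g : Polynomial ℝ) :
    MvPolynomial.degreeOf 1 (Polynomial.aeval (MvPolynomial.X 0 : A2) g) = 0 := by
  rw [degreeOf1_eq]
  have h : MvPolynomial.rename (Equiv.swap (0 : Fin 2) 1)
        (Polynomial.aeval (MvPolynomial.X 0 : A2) g)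
      = Polynomial.aeval (MvPolynomial.X 1 : A2) g := by
    rw [← Polynomial.aeval_algHom_apply]
    simp
  rw [h]
  exact degreeOf0_aevalX1 g

end Stmt13Aux

open Stmt13Aux in
theorem stmt13 (p : Polynomial ℝ) (hp : 1 ≤ p.natDegree) :
    ¬ ∃ (q : Polynomial ℝ) (r : MvPolynomial (Fin 2) ℝ),
        2 ≤ q.natDegree ∧ bivDiff p = Polynomial.aeval r q := by
  rintro ⟨q, r, hq2, hF⟩
  have hp' : derivative p ≠ 0 := fun h => by
    have := Polynomial.natDegree_eq_zero_of_derivative_eq_zero h; omega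
  -- partial derivatives of bivDiff p
  have hd0 : MvPolynomial.pderiv 0 (bivDiff p)
      = Polynomial.aeval (MvPolynomial.X 0 : A2) (derivative p) := by
    unfold bivDiff
    rw [map_sub, pderiv_poly_aeval, pderiv_poly_aeval, MvPolynomial.pderiv_X_self,
      MvPolynomial.pderiv_X_of_ne (by decide), mul_one, mul_zero, sub_zero]
  have hd1 : MvPolynomial.pderiv 1 (bivDiff p)
      = -(Polynomial.aeval (MvPolynomial.X 1 : A2) (derivative p)) := by
    unfold bivDiff
    rw [map_sub, pderiv_poly_aeval, pderiv_poly_aeval, MvPolynomial.pderiv_X_self,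
      MvPolynomial.pderiv_X_of_ne (by decide), mul_one, mul_zero, zero_sub]
  have e0 : Polynomial.aeval r (derivative q) * MvPolynomial.pderiv 0 r
      = Polynomial.aeval (MvPolynomial.X 0 : A2) (derivative p) := by
    rw [← pderiv_poly_aeval, ← hF, hd0]
  have e1 : Polynomial.aeval r (derivative q) * (-(MvPolynomial.pderiv 1 r))
      = Polynomial.aeval (MvPolynomial.X 1 : A2) (derivative p) := by
    rw [mul_neg, ← pderiv_poly_aeval, ← hF, hd1, neg_neg]
  have hP0 : Polynomial.aeval (MvPolynomial.X 0 : A2) (derivative p) ≠ 0 := fun h =>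
    hp' (aevalX_injective 0 (h.trans (map_zero _).symm))
  have hP1 : Polynomial.aeval (MvPolynomial.X 1 : A2) (derivative p) ≠ 0 := fun h =>
    hp' (aevalX_injective 1 (h.trans (map_zero _).symm))
  have hne0 : Polynomial.aeval r (derivative q) * MvPolynomial.pderiv 0 r ≠ 0 := by
    rw [e0]; exact hP0
  have hne1 : Polynomial.aeval r (derivative q) * (-(MvPolynomial.pderiv 1 r)) ≠ 0 := by
    rw [e1]; exact hP1
  have hdne : Polynomial.aeval r (derivative q) ≠ 0 := left_ne_zero_of_mul hne0
  have hrx : MvPolynomial.pderiv 0 r ≠ 0 := right_ne_zero_of_mul hne0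
  have hry : -(MvPolynomial.pderiv 1 r) ≠ 0 := right_ne_zero_of_mul hne1
  -- aeval r (derivative q) is a constant
  have hdeg0 : MvPolynomial.degreeOf 0 (Polynomial.aeval r (derivative q)) = 0 :=
    degreeOf0_mul_left e1 (degreeOf0_aevalX1 _) hdne hry
  have hdeg1 : MvPolynomial.degreeOf 1 (Polynomial.aeval r (derivative q)) = 0 :=
    degreeOf1_mul_left e0 (degreeOf1_aevalX0 _) hdne hrx
  have hC := eq_C_of_degreeOf _ hdeg0 hdeg1
  -- hence aeval r (derivative (derivative q)) = 0
  have hq'' : Polynomial.aeval r (derivative (derivative q)) = 0 := by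
    have h := pderiv_poly_aeval 0 r (derivative q)
    rw [hC, MvPolynomial.pderiv_C] at h
    exact (mul_eq_zero.1 h.symm).resolve_right hrx
  -- step lemma and descent
  have step : ∀ g : Polynomial ℝ, Polynomial.aeval r g = 0 →
      Polynomial.aeval r (derivative g) = 0 := by
    intro g hg
    have h := pderiv_poly_aeval 0 r g
    rw [hg, map_zero] at h
    exact (mul_eq_zero.1 h.symm).resolve_right hrx
  have key : ∀ n : ℕ, ∀ g : Polynomial ℝ, g.natDegree ≤ n →
      Polynomial.aeval r g = 0 → g = 0 := by
    intro n
    induction n with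
    | zero =>
      intro g hgd hg
      rw [Polynomial.eq_C_of_natDegree_eq_zero (Nat.le_zero.1 hgd)] at hg ⊢
      rw [Polynomial.aeval_C] at hg
      have hc0 : g.coeff 0 = 0 := by
        have h2 : MvPolynomial.C (g.coeff 0) = (0 : A2) := hg
        simpa using h2
      rw [hc0, map_zero]
    | succ n ih =>
      intro g hgd hg
      have h0 := Polynomial.natDegree_eq_zero_of_derivative_eq_zero
        (ih (derivative g) ((Polynomial.natDegree_derivative_le g).trans (by omega)) (step g hg))
      exact ih g (by omega) hg
  have hqq : derivative (derivative q) = 0 :=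
    key _ (derivative (derivative q)) le_rfl hq''
  have hq'0 : (derivative q).natDegree = 0 :=
    Polynomial.natDegree_eq_zero_of_derivative_eq_zero hqq
  have hdeg : (derivative q).degree = ((q.natDegree - 1 : ℕ) : WithBot ℕ) :=
    Polynomial.degree_derivative_eq q (by omega)
  have : (derivative q).natDegree = q.natDegree - 1 :=
    Polynomial.natDegree_eq_of_degree_eq_some hdeg
  omega
end

section
/- Let A ⊆ ℝ be a finite set with elements x_1 < x_2 < ⋯ < x_{|A|}, let t ∈ (0,1] satisfy t|A| ≥ 1, and set ℓ = ⌊t|A|/8⌋. Define φ: A → ℝ by φ(a) = (1/|A|)·Σ_{a′ ∈ A} i_{A+A}(a + a′). Suppose a_1, a_2 ∈ A satisfy a_1 ≤ a_2 and φ(a_2) − φ(a_1) ≤ (t/8)·|A + A|. Then there are at least |A|/2 indices i with 1 ≤ i ≤ |A| − ℓ such that i_{A+A}(a_2 + x_{i+ℓ}) − i_{A+A}(a_1 + x_i) ≤ t|A + A|. -/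
open Finset Pointwise

/-- The (1-based) index of `x` in the increasing enumeration of the finite set `X ⊆ ℝ`. -/
noncomputable def idx (X : Finset ℝ) (x : ℝ) : ℕ :=
  (X.filter (fun y => y ≤ x)).card

/-- `φ(a)` is the average over `a' ∈ A` of the index of `a + a'` in `A + A`. -/
noncomputable def phi (A : Finset ℝ) (a : ℝ) : ℝ :=
  (∑ a' ∈ A, (idx (A + A) (a + a') : ℝ)) / (A.card : ℝ)

lemma idx_mono (X : Finset ℝ) {x y : ℝ} (h : x ≤ y) : idx X x ≤ idx X y :=
  Finset.card_le_card (Finset.monotone_filter_right _ (fun _ _ hz => le_trans hz h))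

lemma idx_le (X : Finset ℝ) (x : ℝ) : idx X x ≤ X.card := Finset.card_filter_le _ _

lemma sort_getD_mem (A : Finset ℝ) {j : ℕ} (hj : j < A.card) :
    (A.sort (· ≤ ·)).getD j 0 ∈ A := by
  have hlen : (A.sort (· ≤ ·)).length = A.card := A.length_sort _
  rw [List.getD_eq_getElem _ _ (hlen ▸ hj)]
  exact (Finset.mem_sort _).1 (List.getElem_mem _)

lemma sort_getD_lt (A : Finset ℝ) {j k : ℕ} (hjk : j < k) (hk : k < A.card) :
    (A.sort (· ≤ ·)).getD j 0 < (A.sort (· ≤ ·)).getD k 0 := by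
  have hlen : (A.sort (· ≤ ·)).length = A.card := A.length_sort _
  rw [List.getD_eq_getElem _ _ (hlen ▸ lt_trans hjk hk),
      List.getD_eq_getElem _ _ (hlen ▸ hk)]
  exact (A.sortedLT_sort).pairwise.rel_get_of_lt
    (a := ⟨j, hlen ▸ lt_trans hjk hk⟩) (b := ⟨k, hlen ▸ hk⟩) hjk

lemma sort_getD_le (A : Finset ℝ) {j k : ℕ} (hjk : j ≤ k) (hk : k < A.card) :
    (A.sort (· ≤ ·)).getD j 0 ≤ (A.sort (· ≤ ·)).getD k 0 := by
  rcases eq_or_lt_of_le hjk with rfl | h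
  · exact le_refl _
  · exact le_of_lt (sort_getD_lt A h hk)

lemma sum_idx (A : Finset ℝ) (f : ℝ → ℝ) :
    ∑ i ∈ Finset.Icc 1 A.card, f ((A.sort (· ≤ ·)).getD (i - 1) 0) = ∑ a ∈ A, f a := by
  have hlen : (A.sort (· ≤ ·)).length = A.card := A.length_sort _
  refine Finset.sum_bij (fun i _ => (A.sort (· ≤ ·)).getD (i - 1) 0) ?_ ?_ ?_ ?_
  · intro i hi
    rw [Finset.mem_Icc] at hi
    exact sort_getD_mem A (by omega)
  · intro i hi j hj h
    rw [Finset.mem_Icc] at hi hj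
    by_contra hne
    rcases lt_or_gt_of_ne (show i - 1 ≠ j - 1 by omega) with hlt | hlt
    · exact absurd h (ne_of_lt (sort_getD_lt A hlt (by omega)))
    · exact absurd h.symm (ne_of_lt (sort_getD_lt A hlt (by omega)))
  · intro a ha
    have : a ∈ A.sort (· ≤ ·) := (Finset.mem_sort _).2 ha
    obtain ⟨k, hk, hka⟩ := List.mem_iff_getElem.1 this
    refine ⟨k + 1, Finset.mem_Icc.2 ⟨by omega, by omega⟩, ?_⟩
    rw [show k + 1 - 1 = k from rfl, List.getD_eq_getElem _ _ hk]
    exact hka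
  · intro i hi; rfl

theorem stmt14 (A : Finset ℝ) (t : ℝ) (ht0 : 0 < t) (ht1 : t ≤ 1)
    (htA : 1 ≤ t * (A.card : ℝ))
    (a₁ a₂ : ℝ) (ha₁ : a₁ ∈ A) (ha₂ : a₂ ∈ A) (hle : a₁ ≤ a₂)
    (hphi : phi A a₂ - phi A a₁ ≤ t / 8 * ((A + A).card : ℝ)) :
    (A.card : ℝ) / 2 ≤
      (({i : ℕ | 1 ≤ i ∧ i + ⌊t * (A.card : ℝ) / 8⌋₊ ≤ A.card ∧
          (idx (A + A) (a₂ + (A.sort (· ≤ ·)).getD (i + ⌊t * (A.card : ℝ) / 8⌋₊ - 1) 0) : ℝ)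
            - (idx (A + A) (a₁ + (A.sort (· ≤ ·)).getD (i - 1) 0) : ℝ)
            ≤ t * (((A + A).card : ℝ))}).ncard : ℝ) := by
  classical
  set n := A.card with hn_def
  set ℓ := ⌊t * (n : ℝ) / 8⌋₊ with hl_def
  set K := ((A + A).card : ℝ) with hK_def
  set L := A.sort (· ≤ ·) with hL_def
  -- basic facts
  have hn : 0 < n := by
    by_contra h
    push_neg at h
    interval_cases n
    · simp at htA; linarith
  have hnR : (1 : ℝ) ≤ (n : ℝ) := by exact_mod_cast hn
  have hA_ne : A.Nonempty := Finset.card_pos.1 hn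
  have hAA : (A + A).Nonempty := hA_ne.add hA_ne
  have hK1 : (1 : ℝ) ≤ K := by
    rw [hK_def]; exact_mod_cast Finset.card_pos.2 hAA
  have hK0 : (0 : ℝ) < K := lt_of_lt_of_le one_pos hK1
  have hlt : (ℓ : ℝ) ≤ t * (n : ℝ) / 8 := Nat.floor_le (by positivity)
  have hl8 : (ℓ : ℝ) ≤ (n : ℝ) / 8 := by nlinarith [Nat.cast_nonneg (α := ℝ) n]
  have hln : ℓ ≤ n := by
    have h1 : (ℓ : ℝ) ≤ (n : ℝ) := by linarith
    exact_mod_cast h1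
  -- the shifted index function
  set g : ℝ → ℕ → ℝ := fun a j => (idx (A + A) (a + L.getD (j - 1) 0) : ℝ) with hg_def
  have hsum : ∀ a, ∑ j ∈ Finset.Icc 1 n, g a j = (n : ℝ) * phi A a := by
    intro a
    have h := sum_idx A (fun x => (idx (A + A) (a + x) : ℝ))
    have hne : (n : ℝ) ≠ 0 := by positivity
    rw [phi, ← h, mul_div_cancel₀ _ hne]
  have hg0 : ∀ a j, 0 ≤ g a j := fun a j => Nat.cast_nonneg _
  have hgK : ∀ a j, g a j ≤ K := by
    intro a j
    show ((idx (A + A) (a + L.getD (j - 1) 0) : ℝ)) ≤ ((A + A).card : ℝ)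
    exact_mod_cast idx_le _ _
  have hmono : ∀ i ∈ Finset.Icc 1 (n - ℓ), g a₁ i ≤ g a₂ (i + ℓ) := by
    intro i hi
    rw [Finset.mem_Icc] at hi
    exact Nat.cast_le.2 (idx_mono _ (add_le_add hle (sort_getD_le A (by omega) (by omega))))
  -- upper bound on shifted sum
  have key2 : ∑ i ∈ Finset.Icc 1 (n - ℓ), g a₂ (i + ℓ) ≤ (n : ℝ) * phi A a₂ := by
    rw [← hsum a₂]
    have hmap : Finset.Icc (1 + ℓ) n = (Finset.Icc 1 (n - ℓ)).map (addRightEmbedding ℓ) := by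
      rw [Finset.map_add_right_Icc, Nat.sub_add_cancel hln]
    have h1 : ∑ i ∈ Finset.Icc 1 (n - ℓ), g a₂ (i + ℓ)
        = ∑ j ∈ Finset.Icc (1 + ℓ) n, g a₂ j := by
      rw [hmap, Finset.sum_map]
      rfl
    rw [h1]
    exact Finset.sum_le_sum_of_subset_of_nonneg
      (Finset.Icc_subset_Icc_left (by omega)) (fun j _ _ => hg0 _ _)
  -- lower bound on unshifted sum
  have key1 : (n : ℝ) * phi A a₁ - (ℓ : ℝ) * K ≤ ∑ i ∈ Finset.Icc 1 (n - ℓ), g a₁ i := by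
    have hIcc : ∀ m : ℕ, Finset.Icc 1 m = Finset.Ioc 0 m := fun m => Finset.Icc_add_one_left_eq_Ioc 0 m
    have hsplit : ((∑ i ∈ Finset.Ioc 0 (n - ℓ), g a₁ i) + ∑ i ∈ Finset.Ioc (n - ℓ) n, g a₁ i)
        = ∑ i ∈ Finset.Ioc 0 n, g a₁ i :=
      Finset.sum_Ioc_consecutive _ (Nat.zero_le _) (Nat.sub_le n ℓ)
    have htail : ∑ i ∈ Finset.Ioc (n - ℓ) n, g a₁ i ≤ (ℓ : ℝ) * K := by
      calc ∑ i ∈ Finset.Ioc (n - ℓ) n, g a₁ i ≤ (Finset.Ioc (n - ℓ) n).card • K :=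
            Finset.sum_le_card_nsmul _ _ _ (fun i _ => hgK _ _)
        _ = (ℓ : ℝ) * K := by rw [Nat.card_Ioc, Nat.sub_sub_self hln, nsmul_eq_mul]
    have h1 : ∑ i ∈ Finset.Ioc 0 n, g a₁ i = (n : ℝ) * phi A a₁ := by
      rw [← hIcc]; exact hsum a₁
    rw [hIcc]
    linarith
  -- total sum bound
  have hSbound : ∑ i ∈ Finset.Icc 1 (n - ℓ), (g a₂ (i + ℓ) - g a₁ i) ≤ t * (n : ℝ) * K / 4 := by
    rw [Finset.sum_sub_distrib]
    have h1 : (n : ℝ) * (phi A a₂ - phi A a₁) ≤ (n : ℝ) * (t / 8 * K) :=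
      mul_le_mul_of_nonneg_left hphi (Nat.cast_nonneg n)
    have h2 : (ℓ : ℝ) * K ≤ t * (n : ℝ) / 8 * K :=
      mul_le_mul_of_nonneg_right hlt (le_of_lt hK0)
    nlinarith [key1, key2]
  -- bad and good sets
  set B := (Finset.Icc 1 (n - ℓ)).filter (fun i => ¬(g a₂ (i + ℓ) - g a₁ i ≤ t * K)) with hB_def
  set G := (Finset.Icc 1 (n - ℓ)).filter (fun i => g a₂ (i + ℓ) - g a₁ i ≤ t * K) with hG_def
  have hBcard : (B.card : ℝ) * (t * K) ≤ t * (n : ℝ) * K / 4 := by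
    have h1 : (B.card : ℝ) * (t * K) ≤ ∑ i ∈ B, (g a₂ (i + ℓ) - g a₁ i) := by
      have h := Finset.card_nsmul_le_sum B (fun i => g a₂ (i + ℓ) - g a₁ i) (t * K) ?_
      · rwa [nsmul_eq_mul] at h
      · intro i hi
        rw [hB_def, Finset.mem_filter] at hi
        exact le_of_lt (lt_of_not_ge hi.2)
    have h2 : ∑ i ∈ B, (g a₂ (i + ℓ) - g a₁ i)
        ≤ ∑ i ∈ Finset.Icc 1 (n - ℓ), (g a₂ (i + ℓ) - g a₁ i) :=
      Finset.sum_le_sum_of_subset_of_nonneg (Finset.filter_subset _ _)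
        (fun i hi _ => sub_nonneg.2 (hmono i hi))
    linarith
  have hB4 : (B.card : ℝ) ≤ (n : ℝ) / 4 := by
    have htK : (0 : ℝ) < t * K := mul_pos ht0 hK0
    have h1 : (B.card : ℝ) * (t * K) ≤ ((n : ℝ) / 4) * (t * K) := by
      have : t * (n : ℝ) * K / 4 = ((n : ℝ) / 4) * (t * K) := by ring
      linarith [hBcard]
    exact le_of_mul_le_mul_right h1 htK
  have hGB : G.card + B.card = n - ℓ := by
    rw [hG_def, hB_def, Finset.card_filter_add_card_filter_not, Nat.card_Icc]
    omega
  -- identify the set in the goal with G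
  have hset : {i : ℕ | 1 ≤ i ∧ i + ℓ ≤ n ∧
      (idx (A + A) (a₂ + L.getD (i + ℓ - 1) 0) : ℝ)
        - (idx (A + A) (a₁ + L.getD (i - 1) 0) : ℝ) ≤ t * K} = ↑G := by
    ext i
    simp only [Set.mem_setOf_eq, hG_def, Finset.coe_filter, Set.mem_setOf_eq, Finset.mem_Icc]
    constructor
    · rintro ⟨h1, h2, h3⟩
      exact ⟨⟨h1, by omega⟩, h3⟩
    · rintro ⟨⟨h1, h2⟩, h3⟩
      exact ⟨h1, by omega, h3⟩
  rw [hset, Set.ncard_coe_finset]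
  have hGc : (G.card : ℝ) = ((n - ℓ : ℕ) : ℝ) - (B.card : ℝ) := by
    have := hGB
    push_cast [← this]
    ring
  have hcast : ((n - ℓ : ℕ) : ℝ) = (n : ℝ) - (ℓ : ℝ) := Nat.cast_sub hln
  linarith
end
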